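/- Let G=(V,E) be a convex plane geometric path with |V| ≥ 3 whose edges all lie on the boundary of the convex hull of V, and let R ⊆ V. Then (G,R) admits a happy set if and only if |R| is even and V∖R contains an internal vertex of G (a vertex that is not an endpoint of the path). -/

import Mathlib

open scoped Classical

noncomputable section

abbrev Pt : Type := ℝ × ℝ

/-- Two segments cross: they meet in a point that is not a common endpoint. -/
def SegCross (a b c d : Pt) : Prop :=
  ∃ x : Pt, x ∈ segment ℝ a b ∧ x ∈ segment ℝ c d ∧
    ¬ ((x = a ∨ x = b) ∧ (x = c ∨ x = d))

/-- Crossing of two (undirected) straight-line edges. -/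
def EdgeCross (e f : Sym2 Pt) : Prop :=
  ∃ a b c d : Pt, e = s(a, b) ∧ f = s(c, d) ∧ SegCross a b c d

/-- The closed segment represented by an undirected edge. -/
def SegOf (e : Sym2 Pt) : Set Pt :=
  Sym2.lift ⟨fun a b => segment ℝ a b, fun a b => segment_symm ℝ a b⟩ e

/-- General position: no three of the points are collinear. -/
def GenPos (V : Finset Pt) : Prop :=
  ∀ a ∈ V, ∀ b ∈ V, ∀ c ∈ V, a ≠ b → a ≠ c → b ≠ c →
    ¬ Collinear ℝ ({a, b, c} : Set Pt)

/-- A plane geometric graph. -/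
structure GeomGraph where
  V : Finset Pt
  E : Finset (Sym2 Pt)
  genpos : GenPos V
  edges_sub : ∀ e ∈ E, ∀ v ∈ e, v ∈ V
  edges_ne : ∀ e ∈ E, ¬ e.IsDiag
  plane : ∀ e ∈ E, ∀ f ∈ E, e ≠ f → ¬ EdgeCross e f

/-- Edges of the visibility graph of `G`. -/
def VisEdge (G : GeomGraph) (e : Sym2 Pt) : Prop :=
  ∃ u v : Pt, u ∈ G.V ∧ v ∈ G.V ∧ u ≠ v ∧ e = s(u, v) ∧ e ∉ G.E ∧
    ∀ f ∈ G.E, ¬ EdgeCross e f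

/-- Degree of a point in a finite set of undirected edges. -/
def degIn (H : Finset (Sym2 Pt)) (v : Pt) : ℕ :=
  (H.filter fun e => v ∈ e).card

/-- `H` is a happy set for `(G, R)`. -/
def IsHappySet (G : GeomGraph) (R : Finset Pt) (H : Finset (Sym2 Pt)) : Prop :=
  (∀ e ∈ H, VisEdge G e) ∧
  (∀ e ∈ H, ∀ f ∈ H, e ≠ f → ¬ EdgeCross e f) ∧
  (∀ v : Pt, Odd (degIn H v) ↔ v ∈ R)

def HasHappySet (G : GeomGraph) (R : Finset Pt) : Prop :=
  ∃ H : Finset (Sym2 Pt), IsHappySet G R H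

/-- The points of `V` are in convex position. -/
def ConvexPos (V : Finset Pt) : Prop :=
  ∀ v ∈ V, v ∉ convexHull ℝ ((V : Set Pt) \ {v})

/-- The segment `ab` lies on the boundary of the convex hull of `V`. -/
def OnHullFrontier (V : Finset Pt) (a b : Pt) : Prop :=
  segment ℝ a b ⊆ frontier (convexHull ℝ (V : Set Pt))


noncomputable section

/-- non-(strict-interleaving) of two index chords -/
def NI (q q' : ℕ × ℕ) : Prop :=
  ¬(q.1 < q'.1 ∧ q'.1 < q.2 ∧ q.2 < q'.2) ∧ ¬(q'.1 < q.1 ∧ q.1 < q'.2 ∧ q'.2 < q.2)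

lemma NI.symm {q q' : ℕ × ℕ} (h : NI q q') : NI q' q := ⟨h.2, h.1⟩

lemma NI_mk {a b c d : ℕ} (h : ¬(a < c ∧ c < b ∧ b < d)) (h' : ¬(c < a ∧ a < d ∧ d < b)) :
    NI (a, b) (c, d) := ⟨h, h'⟩

/-- degree of an index in a set of index chords -/
def degP (P : Finset (ℕ × ℕ)) (k : ℕ) : ℕ :=
  (P.filter (fun q => q.1 = k ∨ q.2 = k)).card

lemma degP_insert {P : Finset (ℕ × ℕ)} {q : ℕ × ℕ} (hq : q ∉ P) (k : ℕ) :
    degP (insert q P) k = degP P k + (if q.1 = k ∨ q.2 = k then 1 else 0) := by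
  unfold degP
  rw [Finset.filter_insert]
  split_ifs with h
  · rw [Finset.card_insert_of_notMem (fun hc => hq (Finset.mem_filter.mp hc).1)]
  · simp

lemma degP_image_fanR (S : Finset ℕ) (w : ℕ) (hw : ∀ t ∈ S, t < w) (k : ℕ) :
    degP (S.image (fun t => (t, w))) k =
      if k = w then S.card else (if k ∈ S then 1 else 0) := by
  unfold degP
  rw [Finset.filter_image]
  have hinj : Set.InjOn (fun t => ((t, w) : ℕ × ℕ)) S := by
    intro x _ y _ h; exact ((Prod.mk.injEq _ _ _ _).mp h).1
  rw [Finset.card_image_of_injOn (hinj.mono (Finset.filter_subset _ S))]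
  by_cases hkw : k = w
  · have he : S.filter (fun t => (t, w).1 = k ∨ (t, w).2 = k) = S :=
      Finset.filter_true_of_mem (fun t ht => Or.inr hkw.symm)
    rw [he, if_pos hkw]
  · have he : S.filter (fun t => (t, w).1 = k ∨ (t, w).2 = k) = S.filter (fun t => t = k) := by
      ext t; simp only [Finset.mem_filter]; constructor
      · rintro ⟨ht, h | h⟩
        · exact ⟨ht, h⟩
        · exact absurd h.symm hkw
      · rintro ⟨ht, h⟩; exact ⟨ht, Or.inl h⟩
    rw [he, if_neg hkw, Finset.filter_eq']
    by_cases h : k ∈ S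
    · rw [if_pos h, if_pos h, Finset.card_singleton]
    · rw [if_neg h, if_neg h, Finset.card_empty]

lemma degP_image_fanL (S : Finset ℕ) (w : ℕ) (hw : ∀ t ∈ S, w < t) (k : ℕ) :
    degP (S.image (fun t => (w, t))) k =
      if k = w then S.card else (if k ∈ S then 1 else 0) := by
  unfold degP
  rw [Finset.filter_image]
  have hinj : Set.InjOn (fun t => ((w, t) : ℕ × ℕ)) S := by
    intro x _ y _ h; exact ((Prod.mk.injEq _ _ _ _).mp h).2
  rw [Finset.card_image_of_injOn (hinj.mono (Finset.filter_subset _ S))]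
  by_cases hkw : k = w
  · have he : S.filter (fun t => (w, t).1 = k ∨ (w, t).2 = k) = S :=
      Finset.filter_true_of_mem (fun t ht => Or.inl hkw.symm)
    rw [he, if_pos hkw]
  · have he : S.filter (fun t => (w, t).1 = k ∨ (w, t).2 = k) = S.filter (fun t => t = k) := by
      ext t; simp only [Finset.mem_filter]; constructor
      · rintro ⟨ht, h | h⟩
        · exact absurd h.symm hkw
        · exact ⟨ht, h⟩
      · rintro ⟨ht, h⟩; exact ⟨ht, Or.inr h⟩
    rw [he, if_neg hkw, Finset.filter_eq']
    by_cases h : k ∈ S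
    · rw [if_pos h, if_pos h, Finset.card_singleton]
    · rw [if_neg h, if_neg h, Finset.card_empty]

/-- Main recursive combinatorial construction. -/
lemma combC (N : ℕ) : ∀ (S : Finset ℕ) (m lo hi : ℕ), S.card ≤ N →
    S ⊆ Finset.Ioo lo hi → lo < m → m < hi → m ∉ S → Even S.card →
    ∃ P : Finset (ℕ × ℕ),
      (∀ q ∈ P, q.1 + 2 ≤ q.2 ∧ ((q.1 ∈ S ∧ (q.2 ∈ S ∨ q.2 = hi)) ∨ (q.1 = lo ∧ q.2 ∈ S))) ∧
      (∀ q ∈ P, ∀ q' ∈ P, q ≠ q' → NI q q') ∧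
      (∀ k, Odd (degP P k) ↔ k ∈ S) := by
  induction N with
  | zero =>
    intro S m lo hi hcard _ _ _ _ _
    have : S = ∅ := Finset.card_eq_zero.mp (Nat.le_zero.mp hcard)
    subst this
    exact ⟨∅, by simp, by simp, by intro k; simp [degP]⟩
  | succ N IH =>
    intro S m lo hi hcard hsub hlom hmhi hmS heven
    have hmem : ∀ x ∈ S, lo < x ∧ x < hi := by
      intro x hx; exact Finset.mem_Ioo.mp (hsub hx)
    by_cases hA : (S.filter (fun x => x < m)).Nonempty
    · by_cases hB : (S.filter (fun x => m < x)).Nonempty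
      · -- peel innermost bracket
        set a := (S.filter (fun x => x < m)).max' hA with ha_def
        set b := (S.filter (fun x => m < x)).min' hB with hb_def
        have haS : a ∈ S ∧ a < m := by
          have := (S.filter (fun x => x < m)).max'_mem hA
          exact ⟨(Finset.mem_filter.mp this).1, (Finset.mem_filter.mp this).2⟩
        have hbS : b ∈ S ∧ m < b := by
          have := (S.filter (fun x => m < x)).min'_mem hB
          exact ⟨(Finset.mem_filter.mp this).1, (Finset.mem_filter.mp this).2⟩
        have hgap : ∀ x ∈ S, a < x → x < b → False := by
          intro x hx h1 h2
          rcases lt_trichotomy x m with h | h | h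
          · have := (S.filter (fun x => x < m)).le_max' x (Finset.mem_filter.mpr ⟨hx, h⟩)
            omega
          · exact hmS (h ▸ hx)
          · have := (S.filter (fun x => m < x)).min'_le x (Finset.mem_filter.mpr ⟨hx, h⟩)
            omega
        have hab : a ≠ b := by omega
        set S' := (S.erase a).erase b with hS'_def
        have hS'sub : S' ⊆ S := fun x hx =>
          Finset.mem_of_mem_erase (Finset.mem_of_mem_erase hx)
        have hS'mem : ∀ x, x ∈ S' ↔ (x ∈ S ∧ x ≠ a ∧ x ≠ b) := by
          intro x; rw [hS'_def]
          simp only [Finset.mem_erase]; tauto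
        have hbS' : b ∈ S.erase a := Finset.mem_erase.mpr ⟨fun h => hab h.symm, hbS.1⟩
        have hcard' : S'.card = S.card - 2 := by
          rw [hS'_def, Finset.card_erase_of_mem hbS', Finset.card_erase_of_mem haS.1]; omega
        have hScard2 : 2 ≤ S.card := by
          have hsub2 : ({a, b} : Finset ℕ) ⊆ S := by
            intro x hx
            rcases Finset.mem_insert.mp hx with rfl | hx
            · exact haS.1
            · exact (Finset.mem_singleton.mp hx) ▸ hbS.1
          have h2 : ({a, b} : Finset ℕ).card = 2 := by
            rw [Finset.card_insert_of_notMem (by simp [hab]), Finset.card_singleton]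
          rw [← h2]; exact Finset.card_le_card hsub2
        obtain ⟨P', hForm', hNI', hdeg'⟩ := IH S' m lo hi (by omega)
          (fun x hx => hsub (hS'sub hx)) hlom hmhi
          (fun h => hmS (hS'sub h))
          (by rw [hcard']; rcases heven with ⟨c, hc⟩; exact ⟨c - 1, by omega⟩)
        have habP' : (a, b) ∉ P' := by
          intro h
          rcases (hForm' (a, b) h).2 with ⟨h1, _⟩ | ⟨h1, _⟩
          · rw [hS'mem] at h1; tauto
          · have := hmem a haS.1; omega
        refine ⟨insert (a, b) P', ?_, ?_, ?_⟩
        · intro q hq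
          rcases Finset.mem_insert.mp hq with rfl | hq
          · exact ⟨by have := hmem a haS.1; have := hmem b hbS.1; omega,
              Or.inl ⟨haS.1, Or.inl hbS.1⟩⟩
          · obtain ⟨h1, h2⟩ := hForm' q hq
            refine ⟨h1, ?_⟩
            rcases h2 with ⟨ha', hb'⟩ | ⟨ha', hb'⟩
            · refine Or.inl ⟨hS'sub ha', ?_⟩
              rcases hb' with h | h
              · exact Or.inl (hS'sub h)
              · exact Or.inr h
            · exact Or.inr ⟨ha', hS'sub hb'⟩
        · have key : ∀ q' ∈ P', NI (a, b) q' := by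
            intro q' hq'
            obtain ⟨hlen, hform⟩ := hForm' q' hq'
            constructor
            · rintro ⟨h1, h2, h3⟩
              rcases hform with ⟨hx, _⟩ | ⟨hx, _⟩
              · exact hgap q'.1 (hS'sub hx) h1 h2
              · have := hmem a haS.1; omega
            · rintro ⟨h1, h2, h3⟩
              rcases hform with ⟨_, hy | hy⟩ | ⟨_, hy⟩
              · exact hgap q'.2 (hS'sub hy) h2 h3
              · have := hmem b hbS.1; omega
              · exact hgap q'.2 (hS'sub hy) h2 h3
          intro q hq q' hq' hne
          rcases Finset.mem_insert.mp hq with rfl | hq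
          · rcases Finset.mem_insert.mp hq' with h | hq'2
            · exact absurd h.symm hne
            · exact key q' hq'2
          · rcases Finset.mem_insert.mp hq' with rfl | hq'2
            · exact (key q hq).symm
            · exact hNI' q hq q' hq'2 hne
        · intro k
          rw [degP_insert habP']
          by_cases hka : k = a
          · have hni : k ∉ S' := by rw [hS'mem]; rw [hka]; tauto
            have hev : Even (degP P' k) := Nat.not_odd_iff_even.mp (fun h => hni ((hdeg' k).mp h))
            rw [if_pos (Or.inl hka.symm), Nat.odd_add_one]
            exact iff_of_true (Nat.not_odd_iff_even.mpr hev) (hka.symm ▸ haS.1)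
          · by_cases hkb : k = b
            · have hni : k ∉ S' := by rw [hS'mem]; rw [hkb]; tauto
              have hev : Even (degP P' k) := Nat.not_odd_iff_even.mp (fun h => hni ((hdeg' k).mp h))
              rw [if_pos (Or.inr hkb.symm), Nat.odd_add_one]
              exact iff_of_true (Nat.not_odd_iff_even.mpr hev) (hkb.symm ▸ hbS.1)
            · have hno : ¬ ((a, b).1 = k ∨ (a, b).2 = k) := by
                rintro (h | h)
                · exact hka h.symm
                · exact hkb h.symm
              rw [if_neg hno, Nat.add_zero, hdeg' k, hS'mem k]
              exact ⟨fun h => h.1, fun h => ⟨h, fun h' => hka h', fun h' => hkb h'⟩⟩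
      · -- B empty : all of S is < m : left fan to hi
        have hallS : ∀ x ∈ S, x < m := by
          intro x hx
          rcases lt_trichotomy x m with h | h | h
          · exact h
          · exact absurd (h ▸ hx) hmS
          · exact absurd ⟨x, Finset.mem_filter.mpr ⟨hx, h⟩⟩ hB
        refine ⟨S.image (fun t => (t, hi)), ?_, ?_, ?_⟩
        · intro q hq
          obtain ⟨t, ht, rfl⟩ := Finset.mem_image.mp hq
          exact ⟨by have := hallS t ht; omega, Or.inl ⟨ht, Or.inr rfl⟩⟩
        · intro q hq q' hq' hne
          obtain ⟨t, ht, rfl⟩ := Finset.mem_image.mp hq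
          obtain ⟨t', ht', rfl⟩ := Finset.mem_image.mp hq'
          exact NI_mk (by omega) (by omega)
        · intro k
          rw [degP_image_fanR S hi (fun t ht => lt_trans (hallS t ht) hmhi) k]
          by_cases hk : k = hi
          · rw [if_pos hk]
            have hknot : k ∉ S := fun h => by have := hmem k h; omega
            exact iff_of_false (Nat.not_odd_iff_even.mpr heven) hknot
          · rw [if_neg hk]
            by_cases h : k ∈ S
            · rw [if_pos h]; simpa using h
            · rw [if_neg h]; simpa using h
    · -- A empty : all of S is > m : right fan from lo
      have hallS : ∀ x ∈ S, m < x := by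
        intro x hx
        rcases lt_trichotomy x m with h | h | h
        · exact absurd ⟨x, Finset.mem_filter.mpr ⟨hx, h⟩⟩ hA
        · exact absurd (h ▸ hx) hmS
        · exact h
      refine ⟨S.image (fun t => (lo, t)), ?_, ?_, ?_⟩
      · intro q hq
        obtain ⟨t, ht, rfl⟩ := Finset.mem_image.mp hq
        exact ⟨by have := hallS t ht; omega, Or.inr ⟨rfl, ht⟩⟩
      · intro q hq q' hq' hne
        obtain ⟨t, ht, rfl⟩ := Finset.mem_image.mp hq
        obtain ⟨t', ht', rfl⟩ := Finset.mem_image.mp hq'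
        exact NI_mk (by omega) (by omega)
      · intro k
        rw [degP_image_fanL S lo (fun t ht => lt_trans hlom (hallS t ht)) k]
        by_cases hk : k = lo
        · rw [if_pos hk]
          have hknot : k ∉ S := fun h => by have := hmem k h; omega
          exact iff_of_false (Nat.not_odd_iff_even.mpr heven) hknot
        · rw [if_neg hk]
          by_cases h : k ∈ S
          · rw [if_pos h]; simpa using h
          · rw [if_neg h]; simpa using h
lemma pairwise_NI_insert {P : Finset (ℕ × ℕ)} {q0 : ℕ × ℕ}
    (hNI : ∀ q ∈ P, ∀ q' ∈ P, q ≠ q' → NI q q') (hkey : ∀ q ∈ P, NI q0 q) :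
    ∀ q ∈ insert q0 P, ∀ q' ∈ insert q0 P, q ≠ q' → NI q q' := by
  intro q hq q' hq' hne
  rcases Finset.mem_insert.mp hq with h1 | h1
  · rcases Finset.mem_insert.mp hq' with h2 | h2
    · exact absurd (h1.trans h2.symm) hne
    · cases h1; exact hkey q' h2
  · rcases Finset.mem_insert.mp hq' with h2 | h2
    · cases h2; exact (hkey q h1).symm
    · exact hNI q h1 q' h2 hne

/-- Top-level combinatorial construction.  -/
lemma combo (n : ℕ) (hn : 3 ≤ n) (S : Finset ℕ) (hsub : S ⊆ Finset.range n)
    (heven : Even S.card) (m : ℕ) (hm1 : 1 ≤ m) (hm2 : m ≤ n - 2) (hmS : m ∉ S) :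
    ∃ P : Finset (ℕ × ℕ),
      (∀ q ∈ P, q.1 + 2 ≤ q.2 ∧ q.2 ≤ n - 1) ∧
      (∀ q ∈ P, ∀ q' ∈ P, q ≠ q' → NI q q') ∧
      (∀ k, Odd (degP P k) ↔ k ∈ S) := by
  have hmemn : ∀ x ∈ S, x < n := fun x hx => Finset.mem_range.mp (hsub hx)
  by_cases h0 : 0 ∈ S
  · by_cases hlast : n - 1 ∈ S
    · -- both endpoints in S : big chord (0, n-1)
      set S' := (S.erase 0).erase (n - 1) with hS'def
      have hS'mem : ∀ x, x ∈ S' ↔ x ∈ S ∧ x ≠ 0 ∧ x ≠ n - 1 := by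
        intro x; rw [hS'def]; simp only [Finset.mem_erase]; tauto
      have hlast' : n - 1 ∈ S.erase 0 := Finset.mem_erase.mpr ⟨by omega, hlast⟩
      have hcard' : S'.card = S.card - 2 := by
        rw [hS'def, Finset.card_erase_of_mem hlast', Finset.card_erase_of_mem h0]; omega
      have hScard2 : 2 ≤ S.card := by
        have : ({0, n - 1} : Finset ℕ) ⊆ S := by
          intro x hx
          rcases Finset.mem_insert.mp hx with rfl | hx
          · exact h0
          · exact (Finset.mem_singleton.mp hx) ▸ hlast
        have h2 : ({0, n - 1} : Finset ℕ).card = 2 := by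
          rw [Finset.card_insert_of_notMem (by simp; omega), Finset.card_singleton]
        rw [← h2]; exact Finset.card_le_card this
      obtain ⟨P', hForm', hNI', hdeg'⟩ := combC (S'.card) S' m 0 (n - 1) le_rfl
        (by intro x hx
            have := hS'mem x
            have hx' := this.mp hx
            exact Finset.mem_Ioo.mpr ⟨by omega, by have := hmemn x hx'.1; omega⟩)
        (by omega) (by omega)
        (by rw [hS'mem]; intro h; exact hmS h.1)
        (by rw [hcard']; rcases heven with ⟨c, hc⟩; exact ⟨c - 1, by omega⟩)
      have hbound : ∀ q ∈ P', q.2 ≤ n - 1 := by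
        intro q hq
        rcases (hForm' q hq).2 with ⟨_, hy | hy⟩ | ⟨_, hy⟩
        · have := ((hS'mem q.2).mp hy).1; have := hmemn q.2 this; omega
        · omega
        · have := ((hS'mem q.2).mp hy).1; have := hmemn q.2 this; omega
      have hnew : (0, n - 1) ∉ P' := by
        intro h
        rcases (hForm' _ h).2 with ⟨h1, _⟩ | ⟨_, h2⟩
        · exact absurd ((hS'mem 0).mp h1).2.1 (by simp)
        · exact absurd ((hS'mem (n-1)).mp h2).2.2 (by simp)
      refine ⟨insert (0, n - 1) P', ?_, ?_, ?_⟩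
      · intro q hq
        rcases Finset.mem_insert.mp hq with rfl | hq
        · exact ⟨by omega, le_rfl⟩
        · exact ⟨(hForm' q hq).1, hbound q hq⟩
      · refine pairwise_NI_insert hNI' ?_
        intro q hq
        refine NI_mk ?_ ?_
        · have := hbound q hq; omega
        · omega
      · intro k
        rw [degP_insert hnew]
        by_cases hk0 : k = 0
        · have hni : k ∉ S' := by rw [hS'mem]; intro h; exact h.2.1 hk0
          have hev : Even (degP P' k) := Nat.not_odd_iff_even.mp (fun h => hni ((hdeg' k).mp h))
          rw [if_pos (Or.inl hk0.symm), Nat.odd_add_one]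
          exact iff_of_true (Nat.not_odd_iff_even.mpr hev) (hk0.symm ▸ h0)
        · by_cases hkl : k = n - 1
          · have hni : k ∉ S' := by rw [hS'mem]; intro h; exact h.2.2 hkl
            have hev : Even (degP P' k) := Nat.not_odd_iff_even.mp (fun h => hni ((hdeg' k).mp h))
            rw [if_pos (Or.inr hkl.symm), Nat.odd_add_one]
            exact iff_of_true (Nat.not_odd_iff_even.mpr hev) (hkl.symm ▸ hlast)
          · have hno : ¬ (((0 : ℕ), n - 1).1 = k ∨ ((0 : ℕ), n - 1).2 = k) := by
              rintro (h | h)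
              · exact hk0 h.symm
              · exact hkl h.symm
            rw [if_neg hno, Nat.add_zero, hdeg' k, hS'mem k]
            exact ⟨fun h => h.1, fun h => ⟨h, fun h' => hk0 h', fun h' => hkl h'⟩⟩
    · -- 0 ∈ S, n-1 ∉ S
      have hSe : (S.erase 0).Nonempty := by
        rw [← Finset.card_pos, Finset.card_erase_of_mem h0]
        rcases heven with ⟨c, hc⟩
        have : S.Nonempty := ⟨0, h0⟩
        have := Finset.card_pos.mpr this
        omega
      set t0 := (S.erase 0).min' hSe with ht0def
      have ht0S : t0 ∈ S ∧ t0 ≠ 0 := by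
        have := (S.erase 0).min'_mem hSe
        exact ⟨Finset.mem_of_mem_erase this, (Finset.mem_erase.mp this).1⟩
      have ht0min : ∀ x ∈ S, x ≠ 0 → t0 ≤ x := by
        intro x hx hx0
        exact (S.erase 0).min'_le x (Finset.mem_erase.mpr ⟨hx0, hx⟩)
      have ht0n : t0 < n := hmemn t0 ht0S.1
      have ht0ne : t0 ≠ n - 1 := fun h => hlast (h ▸ ht0S.1)
      by_cases ht02 : 2 ≤ t0
      · -- chord (0, t0)
        set S' := (S.erase 0).erase t0 with hS'def
        have hS'mem : ∀ x, x ∈ S' ↔ x ∈ S ∧ x ≠ 0 ∧ x ≠ t0 := by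
          intro x; rw [hS'def]; simp only [Finset.mem_erase]; tauto
        have ht0' : t0 ∈ S.erase 0 := (S.erase 0).min'_mem hSe
        have hcard' : S'.card = S.card - 2 := by
          rw [hS'def, Finset.card_erase_of_mem ht0', Finset.card_erase_of_mem h0]; omega
        obtain ⟨P', hForm', hNI', hdeg'⟩ := combC (S'.card) S' m 0 (n - 1) le_rfl
          (by intro x hx
              have hx' := (hS'mem x).mp hx
              have hxn := hmemn x hx'.1
              have : x ≠ n - 1 := fun h => hlast (h ▸ hx'.1)
              exact Finset.mem_Ioo.mpr ⟨by omega, by omega⟩)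
          (by omega) (by omega)
          (by rw [hS'mem]; intro h; exact hmS h.1)
          (by rw [hcard']
              have : 2 ≤ S.card := by
                have hs2 : ({0, t0} : Finset ℕ) ⊆ S := by
                  intro x hx
                  rcases Finset.mem_insert.mp hx with rfl | hx
                  · exact h0
                  · exact (Finset.mem_singleton.mp hx) ▸ ht0S.1
                have h2 : ({0, t0} : Finset ℕ).card = 2 := by
                  rw [Finset.card_insert_of_notMem (by simp; omega), Finset.card_singleton]
                rw [← h2]; exact Finset.card_le_card hs2
              rcases heven with ⟨c, hc⟩; exact ⟨c - 1, by omega⟩)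
        have hS'big : ∀ x ∈ S', t0 < x := by
          intro x hx
          have hx' := (hS'mem x).mp hx
          have := ht0min x hx'.1 hx'.2.1
          omega
        have hbound : ∀ q ∈ P', q.2 ≤ n - 1 ∧ (q.1 ∈ S' ∨ q.1 = 0) := by
          intro q hq
          rcases (hForm' q hq).2 with ⟨hx, hy | hy⟩ | ⟨hx, hy⟩
          · have := hmemn q.2 ((hS'mem q.2).mp hy).1; exact ⟨by omega, Or.inl hx⟩
          · exact ⟨by omega, Or.inl hx⟩
          · have := hmemn q.2 ((hS'mem q.2).mp hy).1; exact ⟨by omega, Or.inr hx⟩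
        have hnew : (0, t0) ∉ P' := by
          intro h
          rcases (hForm' _ h).2 with ⟨h1, _⟩ | ⟨_, h2⟩
          · exact absurd ((hS'mem 0).mp h1).2.1 (by simp)
          · exact absurd ((hS'mem t0).mp h2).2.2 (by simp)
        refine ⟨insert (0, t0) P', ?_, ?_, ?_⟩
        · intro q hq
          rcases Finset.mem_insert.mp hq with rfl | hq
          · exact ⟨by omega, by omega⟩
          · exact ⟨(hForm' q hq).1, (hbound q hq).1⟩
        · refine pairwise_NI_insert hNI' ?_
          intro q hq
          refine NI_mk ?_ ?_
          · rintro ⟨hq1, hq2, hq3⟩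
            rcases (hbound q hq).2 with hx | hx
            · have := hS'big q.1 hx; omega
            · omega
          · omega
        · intro k
          rw [degP_insert hnew]
          by_cases hk0 : k = 0
          · have hni : k ∉ S' := by rw [hS'mem]; intro h; exact h.2.1 hk0
            have hev : Even (degP P' k) := Nat.not_odd_iff_even.mp (fun h => hni ((hdeg' k).mp h))
            rw [if_pos (Or.inl hk0.symm), Nat.odd_add_one]
            exact iff_of_true (Nat.not_odd_iff_even.mpr hev) (hk0.symm ▸ h0)
          · by_cases hkt : k = t0
            · have hni : k ∉ S' := by rw [hS'mem]; intro h; exact h.2.2 hkt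
              have hev : Even (degP P' k) := Nat.not_odd_iff_even.mp (fun h => hni ((hdeg' k).mp h))
              rw [if_pos (Or.inr hkt.symm), Nat.odd_add_one]
              exact iff_of_true (Nat.not_odd_iff_even.mpr hev) (hkt.symm ▸ ht0S.1)
            · have hno : ¬ (((0 : ℕ), t0).1 = k ∨ ((0 : ℕ), t0).2 = k) := by
                rintro (h | h)
                · exact hk0 h.symm
                · exact hkt h.symm
              rw [if_neg hno, Nat.add_zero, hdeg' k, hS'mem k]
              exact ⟨fun h => h.1, fun h => ⟨h, fun h' => hk0 h', fun h' => hkt h'⟩⟩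
      · -- t0 = 1 : cherry (0, n-1), (1, n-1)
        have ht01 : t0 = 1 := by omega
        have h1S : 1 ∈ S := ht01 ▸ ht0S.1
        have hm2' : 2 ≤ m := by
          rcases Nat.lt_or_ge m 2 with h | h
          · exfalso; have : m = 1 := by omega
            exact hmS (this ▸ h1S)
          · exact h
        set S' := (S.erase 0).erase 1 with hS'def
        have hS'mem : ∀ x, x ∈ S' ↔ x ∈ S ∧ x ≠ 0 ∧ x ≠ 1 := by
          intro x; rw [hS'def]; simp only [Finset.mem_erase]; tauto
        have h1' : 1 ∈ S.erase 0 := Finset.mem_erase.mpr ⟨by omega, h1S⟩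
        have hcard' : S'.card = S.card - 2 := by
          rw [hS'def, Finset.card_erase_of_mem h1', Finset.card_erase_of_mem h0]; omega
        have hScard2 : 2 ≤ S.card := by
          have hs2 : ({0, 1} : Finset ℕ) ⊆ S := by
            intro x hx
            rcases Finset.mem_insert.mp hx with rfl | hx
            · exact h0
            · exact (Finset.mem_singleton.mp hx) ▸ h1S
          have h2 : ({0, 1} : Finset ℕ).card = 2 := by decide
          rw [← h2]; exact Finset.card_le_card hs2
        obtain ⟨P', hForm', hNI', hdeg'⟩ := combC (S'.card) S' m 1 (n - 1) le_rfl
          (by intro x hx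
              have hx' := (hS'mem x).mp hx
              have hxn := hmemn x hx'.1
              have : x ≠ n - 1 := fun h => hlast (h ▸ hx'.1)
              exact Finset.mem_Ioo.mpr ⟨by omega, by omega⟩)
          (by omega) (by omega)
          (by rw [hS'mem]; intro h; exact hmS h.1)
          (by rw [hcard']; rcases heven with ⟨c, hc⟩; exact ⟨c - 1, by omega⟩)
        have hbound : ∀ q ∈ P', q.2 ≤ n - 1 ∧ 1 ≤ q.1 := by
          intro q hq
          rcases (hForm' q hq).2 with ⟨hx, hy | hy⟩ | ⟨hx, hy⟩
          · have h2 := hmemn q.2 ((hS'mem q.2).mp hy).1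
            have h3 := ((hS'mem q.1).mp hx).2
            omega
          · have h3 := ((hS'mem q.1).mp hx).2
            omega
          · have h2 := hmemn q.2 ((hS'mem q.2).mp hy).1
            omega
        have hnew1 : (1, n - 1) ∉ P' := by
          intro h
          rcases (hForm' _ h).2 with ⟨h1, _⟩ | ⟨_, h2⟩
          · exact absurd ((hS'mem 1).mp h1).2.2 (by simp)
          · exact hlast ((hS'mem (n-1)).mp h2).1
        have hnew0 : (0, n - 1) ∉ insert (1, n - 1) P' := by
          intro h
          rcases Finset.mem_insert.mp h with h | h
          · exact absurd ((Prod.mk.injEq _ _ _ _).mp h).1 (by omega)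
          · rcases (hForm' _ h).2 with ⟨h1, _⟩ | ⟨h1, _⟩
            · exact absurd ((hS'mem 0).mp h1).2.1 (by simp)
            · exact absurd h1 (by omega)
        refine ⟨insert (0, n - 1) (insert (1, n - 1) P'), ?_, ?_, ?_⟩
        · intro q hq
          rcases Finset.mem_insert.mp hq with rfl | hq
          · exact ⟨by omega, le_rfl⟩
          rcases Finset.mem_insert.mp hq with rfl | hq
          · exact ⟨by omega, le_rfl⟩
          · exact ⟨(hForm' q hq).1, (hbound q hq).1⟩
        · refine pairwise_NI_insert (pairwise_NI_insert hNI' ?_) ?_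
          · intro q hq
            refine NI_mk ?_ ?_
            · have := (hbound q hq).1; omega
            · have := (hbound q hq).2; omega
          · intro q hq
            rcases Finset.mem_insert.mp hq with rfl | hq
            · exact NI_mk (by omega) (by omega)
            · refine NI_mk ?_ ?_
              · have := (hbound q hq).1; omega
              · omega
        · intro k
          rw [degP_insert hnew0, degP_insert hnew1]
          by_cases hk0 : k = 0
          · have hni : k ∉ S' := by rw [hS'mem]; intro h; exact h.2.1 hk0
            have hev : Even (degP P' k) := Nat.not_odd_iff_even.mp (fun h => hni ((hdeg' k).mp h))
            rw [if_pos (Or.inl hk0.symm), if_neg (by rintro (h | h) <;> omega)]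
            have hd := Nat.even_iff.mp hev
            rw [Nat.odd_iff]
            exact iff_of_true (by omega) (hk0.symm ▸ h0)
          · by_cases hk1 : k = 1
            · have hni : k ∉ S' := by rw [hS'mem]; intro h; exact h.2.2 hk1
              have hev : Even (degP P' k) := Nat.not_odd_iff_even.mp (fun h => hni ((hdeg' k).mp h))
              rw [if_pos (Or.inl hk1.symm), if_neg (by rintro (h | h) <;> omega)]
              have hd := Nat.even_iff.mp hev
              rw [Nat.odd_iff]
              exact iff_of_true (by omega) (hk1.symm ▸ h1S)
            · by_cases hkl : k = n - 1
              · have hni : k ∉ S' := by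
                  rw [hS'mem]; intro h; exact hlast (hkl ▸ h.1)
                have hev : Even (degP P' k) := Nat.not_odd_iff_even.mp (fun h => hni ((hdeg' k).mp h))
                rw [if_pos (Or.inr hkl.symm), if_pos (Or.inr hkl.symm)]
                have : ¬ (k ∈ S) := fun h => hlast (hkl ▸ h)
                have hd := Nat.even_iff.mp hev
                refine iff_of_false ?_ this
                rw [Nat.odd_iff]
                omega
              · have hno : ¬ (((0:ℕ), n - 1).1 = k ∨ ((0:ℕ), n-1).2 = k) := by
                  rintro (h | h) <;> omega
                have hno1 : ¬ (((1:ℕ), n - 1).1 = k ∨ ((1:ℕ), n-1).2 = k) := by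
                  rintro (h | h) <;> omega
                rw [if_neg hno, if_neg hno1]; simp only [Nat.add_zero]; rw [hdeg' k, hS'mem k]
                exact ⟨fun h => h.1, fun h => ⟨h, fun h' => hk0 h', fun h' => hk1 h'⟩⟩
  · by_cases hlast : n - 1 ∈ S
    · -- n-1 ∈ S, 0 ∉ S
      have hSe : (S.erase (n - 1)).Nonempty := by
        rw [← Finset.card_pos, Finset.card_erase_of_mem hlast]
        rcases heven with ⟨c, hc⟩
        have : S.Nonempty := ⟨n - 1, hlast⟩
        have := Finset.card_pos.mpr this
        omega
      set t1 := (S.erase (n - 1)).max' hSe with ht1def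
      have ht1S : t1 ∈ S ∧ t1 ≠ n - 1 := by
        have := (S.erase (n - 1)).max'_mem hSe
        exact ⟨Finset.mem_of_mem_erase this, (Finset.mem_erase.mp this).1⟩
      have ht1max : ∀ x ∈ S, x ≠ n - 1 → x ≤ t1 := by
        intro x hx hx0
        exact (S.erase (n - 1)).le_max' x (Finset.mem_erase.mpr ⟨hx0, hx⟩)
      have ht1n : t1 < n := hmemn t1 ht1S.1
      have ht1ne : t1 ≠ 0 := fun h => h0 (h ▸ ht1S.1)
      by_cases ht12 : t1 + 2 ≤ n - 1
      · -- chord (t1, n-1)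
        set S' := (S.erase (n - 1)).erase t1 with hS'def
        have hS'mem : ∀ x, x ∈ S' ↔ x ∈ S ∧ x ≠ n - 1 ∧ x ≠ t1 := by
          intro x; rw [hS'def]; simp only [Finset.mem_erase]; tauto
        have ht1' : t1 ∈ S.erase (n - 1) := (S.erase (n - 1)).max'_mem hSe
        have hcard' : S'.card = S.card - 2 := by
          rw [hS'def, Finset.card_erase_of_mem ht1', Finset.card_erase_of_mem hlast]; omega
        obtain ⟨P', hForm', hNI', hdeg'⟩ := combC (S'.card) S' m 0 (n - 1) le_rfl
          (by intro x hx
              have hx' := (hS'mem x).mp hx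
              have hxn := hmemn x hx'.1
              have : x ≠ 0 := fun h => h0 (h ▸ hx'.1)
              exact Finset.mem_Ioo.mpr ⟨by omega, by omega⟩)
          (by omega) (by omega)
          (by rw [hS'mem]; intro h; exact hmS h.1)
          (by rw [hcard']
              have : 2 ≤ S.card := by
                have hs2 : ({t1, n - 1} : Finset ℕ) ⊆ S := by
                  intro x hx
                  rcases Finset.mem_insert.mp hx with rfl | hx
                  · exact ht1S.1
                  · exact (Finset.mem_singleton.mp hx) ▸ hlast
                have h2 : ({t1, n - 1} : Finset ℕ).card = 2 := by
                  rw [Finset.card_insert_of_notMem (by simp [ht1S.2]), Finset.card_singleton]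
                rw [← h2]; exact Finset.card_le_card hs2
              rcases heven with ⟨c, hc⟩; exact ⟨c - 1, by omega⟩)
        have hS'small : ∀ x ∈ S', x < t1 := by
          intro x hx
          have hx' := (hS'mem x).mp hx
          have := ht1max x hx'.1 hx'.2.1
          omega
        have hbound : ∀ q ∈ P', (q.2 ∈ S' ∨ q.2 = n - 1) ∧ q.2 ≤ n - 1 := by
          intro q hq
          rcases (hForm' q hq).2 with ⟨hx, hy | hy⟩ | ⟨hx, hy⟩
          · have := hmemn q.2 ((hS'mem q.2).mp hy).1; exact ⟨Or.inl hy, by omega⟩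
          · exact ⟨Or.inr hy, by omega⟩
          · have := hmemn q.2 ((hS'mem q.2).mp hy).1; exact ⟨Or.inl hy, by omega⟩
        have hnew : (t1, n - 1) ∉ P' := by
          intro h
          rcases (hForm' _ h).2 with ⟨h1, _⟩ | ⟨h1, _⟩
          · exact absurd ((hS'mem t1).mp h1).2.2 (by simp)
          · exact ht1ne h1
        refine ⟨insert (t1, n - 1) P', ?_, ?_, ?_⟩
        · intro q hq
          rcases Finset.mem_insert.mp hq with rfl | hq
          · exact ⟨by omega, le_rfl⟩
          · exact ⟨(hForm' q hq).1, (hbound q hq).2⟩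
        · refine pairwise_NI_insert hNI' ?_
          intro q hq
          refine NI_mk ?_ ?_
          · have := (hbound q hq).2; omega
          · rintro ⟨hq1, hq2, hq3⟩
            rcases (hbound q hq).1 with hy | hy
            · have := hS'small q.2 hy; omega
            · omega
        · intro k
          rw [degP_insert hnew]
          by_cases hkt : k = t1
          · have hni : k ∉ S' := by rw [hS'mem]; intro h; exact h.2.2 hkt
            have hev : Even (degP P' k) := Nat.not_odd_iff_even.mp (fun h => hni ((hdeg' k).mp h))
            rw [if_pos (Or.inl hkt.symm), Nat.odd_add_one]
            exact iff_of_true (Nat.not_odd_iff_even.mpr hev) (hkt.symm ▸ ht1S.1)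
          · by_cases hkl : k = n - 1
            · have hni : k ∉ S' := by rw [hS'mem]; intro h; exact h.2.1 hkl
              have hev : Even (degP P' k) := Nat.not_odd_iff_even.mp (fun h => hni ((hdeg' k).mp h))
              rw [if_pos (Or.inr hkl.symm), Nat.odd_add_one]
              exact iff_of_true (Nat.not_odd_iff_even.mpr hev) (hkl.symm ▸ hlast)
            · have hno : ¬ ((t1, n - 1).1 = k ∨ (t1, n - 1).2 = k) := by
                rintro (h | h)
                · exact hkt h.symm
                · exact hkl h.symm
              rw [if_neg hno, Nat.add_zero, hdeg' k, hS'mem k]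
              exact ⟨fun h => h.1, fun h => ⟨h, fun h' => hkl h', fun h' => hkt h'⟩⟩
      · -- t1 = n - 2 : cherry (0, n-2), (0, n-1)
        have ht1eq : t1 = n - 2 := by omega
        have hn2S : n - 2 ∈ S := ht1eq ▸ ht1S.1
        have hm2' : m ≤ n - 3 := by
          have : m ≠ n - 2 := fun h => hmS (h ▸ hn2S)
          omega
        set S' := (S.erase (n - 1)).erase (n - 2) with hS'def
        have hS'mem : ∀ x, x ∈ S' ↔ x ∈ S ∧ x ≠ n - 1 ∧ x ≠ n - 2 := by
          intro x; rw [hS'def]; simp only [Finset.mem_erase]; tauto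
        have hn2' : n - 2 ∈ S.erase (n - 1) := Finset.mem_erase.mpr ⟨by omega, hn2S⟩
        have hcard' : S'.card = S.card - 2 := by
          rw [hS'def, Finset.card_erase_of_mem hn2', Finset.card_erase_of_mem hlast]; omega
        have hScard2 : 2 ≤ S.card := by
          have hs2 : ({n - 2, n - 1} : Finset ℕ) ⊆ S := by
            intro x hx
            rcases Finset.mem_insert.mp hx with rfl | hx
            · exact hn2S
            · exact (Finset.mem_singleton.mp hx) ▸ hlast
          have h2 : ({n - 2, n - 1} : Finset ℕ).card = 2 := by
            rw [Finset.card_insert_of_notMem (by simp; omega), Finset.card_singleton]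
          rw [← h2]; exact Finset.card_le_card hs2
        obtain ⟨P', hForm', hNI', hdeg'⟩ := combC (S'.card) S' m 0 (n - 2) le_rfl
          (by intro x hx
              have hx' := (hS'mem x).mp hx
              have hxn := hmemn x hx'.1
              have : x ≠ 0 := fun h => h0 (h ▸ hx'.1)
              exact Finset.mem_Ioo.mpr ⟨by omega, by omega⟩)
          (by omega) (by omega)
          (by rw [hS'mem]; intro h; exact hmS h.1)
          (by rw [hcard']; rcases heven with ⟨c, hc⟩; exact ⟨c - 1, by omega⟩)
        have hbound : ∀ q ∈ P', q.2 ≤ n - 2 := by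
          intro q hq
          rcases (hForm' q hq).2 with ⟨hx, hy | hy⟩ | ⟨hx, hy⟩
          · have := hmemn q.2 ((hS'mem q.2).mp hy).1
            have := ((hS'mem q.2).mp hy).2
            omega
          · omega
          · have := ((hS'mem q.2).mp hy).2
            have := hmemn q.2 ((hS'mem q.2).mp hy).1
            omega
        have hn4 : 4 ≤ n := by omega
        have hnew2 : (0, n - 2) ∉ P' := by
          intro h
          rcases (hForm' _ h).2 with ⟨h1, _⟩ | ⟨_, h2⟩
          · exact h0 ((hS'mem 0).mp h1).1
          · exact absurd ((hS'mem (n - 2)).mp h2).2.2 (by simp)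
        have hnew1 : (0, n - 1) ∉ insert (0, n - 2) P' := by
          intro h
          rcases Finset.mem_insert.mp h with h | h
          · exact absurd ((Prod.mk.injEq _ _ _ _).mp h).2 (by omega)
          · rcases (hForm' _ h).2 with ⟨h1, _⟩ | ⟨_, h2⟩
            · exact h0 ((hS'mem 0).mp h1).1
            · exact absurd ((hS'mem (n - 1)).mp h2).2.1 (by simp)
        refine ⟨insert (0, n - 1) (insert (0, n - 2) P'), ?_, ?_, ?_⟩
        · intro q hq
          rcases Finset.mem_insert.mp hq with rfl | hq
          · exact ⟨by omega, le_rfl⟩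
          rcases Finset.mem_insert.mp hq with rfl | hq
          · exact ⟨by omega, by omega⟩
          · have := hbound q hq
            exact ⟨(hForm' q hq).1, by omega⟩
        · refine pairwise_NI_insert (pairwise_NI_insert hNI' ?_) ?_
          · intro q hq
            refine NI_mk ?_ ?_
            · have := hbound q hq; omega
            · omega
          · intro q hq
            rcases Finset.mem_insert.mp hq with rfl | hq
            · exact NI_mk (by omega) (by omega)
            · refine NI_mk ?_ ?_
              · have := hbound q hq; omega
              · omega
        · intro k
          rw [degP_insert hnew1, degP_insert hnew2]
          by_cases hk0 : k = 0
          · have hni : k ∉ S' := by rw [hS'mem]; intro h; exact h0 (hk0 ▸ h.1)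
            have hev : Even (degP P' k) := Nat.not_odd_iff_even.mp (fun h => hni ((hdeg' k).mp h))
            rw [if_pos (Or.inl hk0.symm), if_pos (Or.inl hk0.symm)]
            have : ¬ (k ∈ S) := fun h => h0 (hk0 ▸ h)
            have hd := Nat.even_iff.mp hev
            refine iff_of_false ?_ this
            rw [Nat.odd_iff]
            omega
          · by_cases hk2 : k = n - 2
            · have hni : k ∉ S' := by rw [hS'mem]; intro h; exact h.2.2 hk2
              have hev : Even (degP P' k) := Nat.not_odd_iff_even.mp (fun h => hni ((hdeg' k).mp h))
              rw [if_pos (Or.inr hk2.symm), if_neg (by rintro (h | h) <;> omega)]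
              have hd := Nat.even_iff.mp hev
              rw [Nat.odd_iff]
              exact iff_of_true (by omega) (hk2.symm ▸ hn2S)
            · by_cases hkl : k = n - 1
              · have hni : k ∉ S' := by rw [hS'mem]; intro h; exact h.2.1 hkl
                have hev : Even (degP P' k) := Nat.not_odd_iff_even.mp (fun h => hni ((hdeg' k).mp h))
                rw [if_pos (Or.inr hkl.symm), if_neg (by rintro (h | h) <;> omega)]
                have hd := Nat.even_iff.mp hev
                rw [Nat.odd_iff]
                exact iff_of_true (by omega) (hkl.symm ▸ hlast)
              · have hno1 : ¬ (((0:ℕ), n - 1).1 = k ∨ ((0:ℕ), n - 1).2 = k) := by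
                  rintro (h | h) <;> omega
                have hno2 : ¬ (((0:ℕ), n - 2).1 = k ∨ ((0:ℕ), n - 2).2 = k) := by
                  rintro (h | h) <;> omega
                rw [if_neg hno1, if_neg hno2]; simp only [Nat.add_zero]; rw [hdeg' k, hS'mem k]
                exact ⟨fun h => h.1, fun h => ⟨h, fun h' => hkl h', fun h' => hk2 h'⟩⟩
    · -- neither endpoint in S
      obtain ⟨P', hForm', hNI', hdeg'⟩ := combC (S.card) S m 0 (n - 1) le_rfl
        (by intro x hx
            have hxn := hmemn x hx
            have hx0 : x ≠ 0 := fun h => h0 (h ▸ hx)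
            have hxl : x ≠ n - 1 := fun h => hlast (h ▸ hx)
            exact Finset.mem_Ioo.mpr ⟨by omega, by omega⟩)
        (by omega) (by omega) hmS heven
      refine ⟨P', ?_, hNI', hdeg'⟩
      intro q hq
      refine ⟨(hForm' q hq).1, ?_⟩
      rcases (hForm' q hq).2 with ⟨_, hy | hy⟩ | ⟨_, hy⟩
      · have := hmemn q.2 hy; omega
      · omega
      · have := hmemn q.2 hy; omega
/-! ### Determinant / orientation algebra -/

def Dt (a b c : Pt) : ℝ := (b.1 - a.1) * (c.2 - a.2) - (b.2 - a.2) * (c.1 - a.1)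

lemma Dt_cyc (a b c : Pt) : Dt a b c = Dt b c a := by unfold Dt; ring

lemma Dt_swap (a b c : Pt) : Dt a b c = - Dt a c b := by unfold Dt; ring

lemma Dt_seg_affine (u v a b : Pt) (t : ℝ) :
    Dt u v ((1 - t) • a + t • b) = (1 - t) * Dt u v a + t * Dt u v b := by
  rcases u with ⟨u1, u2⟩; rcases v with ⟨v1, v2⟩; rcases a with ⟨a1, a2⟩; rcases b with ⟨b1, b2⟩
  simp only [Dt, Prod.smul_mk, Prod.mk_add_mk, smul_eq_mul]
  ring

lemma seg_param {a b x : Pt} :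
    x ∈ segment ℝ a b ↔ ∃ t : ℝ, 0 ≤ t ∧ t ≤ 1 ∧ x = (1 - t) • a + t • b := by
  rw [segment_eq_image]
  constructor
  · rintro ⟨t, ht, rfl⟩
    exact ⟨t, ht.1, ht.2, rfl⟩
  · rintro ⟨t, h0, h1, rfl⟩
    exact ⟨t, ⟨h0, h1⟩, rfl⟩

lemma collinear_of_Dt_eq_zero {a b c : Pt} (h : Dt a b c = 0) :
    Collinear ℝ ({a, b, c} : Set Pt) := by
  by_cases hab : b = a
  · subst hab
    rw [Set.insert_idem]
    exact collinear_pair ℝ b c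
  · rw [collinear_iff_of_mem (Set.mem_insert a {b, c})]
    refine ⟨b - a, ?_⟩
    intro q hq
    rcases hq with rfl | rfl | rfl
    · exact ⟨0, by simp⟩
    · exact ⟨1, by simp⟩
    · by_cases h1 : b.1 - a.1 ≠ 0
      · refine ⟨(q.1 - a.1) / (b.1 - a.1), ?_⟩
        have h2 : (b.1 - a.1) * (q.2 - a.2) = (b.2 - a.2) * (q.1 - a.1) := by
          unfold Dt at h; linarith
        have : q = ((q.1 - a.1) / (b.1 - a.1)) • (b - a) + a := by
          apply Prod.ext
          · simp only [Prod.fst_add, Prod.smul_fst, Prod.fst_sub, smul_eq_mul]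
            field_simp
            ring
          · simp only [Prod.snd_add, Prod.smul_snd, Prod.snd_sub, smul_eq_mul]
            field_simp
            linarith [h2]
        rw [vadd_eq_add]; exact this
      · push_neg at h1
        have h2 : b.2 - a.2 ≠ 0 := by
          intro h2
          apply hab
          apply Prod.ext <;> [skip; skip] <;> linarith
        refine ⟨(q.2 - a.2) / (b.2 - a.2), ?_⟩
        have h3 : (b.2 - a.2) * (q.1 - a.1) = 0 := by
          unfold Dt at h; rw [h1] at h; linarith
        have h4 : q.1 - a.1 = 0 := by
          rcases mul_eq_zero.mp h3 with h | h
          · exact absurd h h2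
          · exact h
        have : q = ((q.2 - a.2) / (b.2 - a.2)) • (b - a) + a := by
          apply Prod.ext
          · simp only [Prod.fst_add, Prod.smul_fst, Prod.fst_sub, smul_eq_mul]
            rw [h1]
            field_simp
            linarith
          · simp only [Prod.snd_add, Prod.smul_snd, Prod.snd_sub, smul_eq_mul]
            field_simp
            ring
        rw [vadd_eq_add]; exact this
/-! ### Linear functionals on the plane -/

lemma f_coords (f : Pt →L[ℝ] ℝ) (x : Pt) :
    f x = x.1 * f (1, 0) + x.2 * f (0, 1) := by
  have hx : x = x.1 • ((1 : ℝ), (0 : ℝ)) + x.2 • ((0 : ℝ), (1 : ℝ)) := by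
    apply Prod.ext <;> simp
  conv_lhs => rw [hx]
  rw [map_add, map_smul, map_smul]
  simp [smul_eq_mul]

lemma Dt_eq_zero_of_level {f : Pt →L[ℝ] ℝ} {a b c : Pt} {γ : ℝ}
    (ha : f a = γ) (hb : f b = γ) (hc : f c = γ) (hne : ∃ y, f y < γ) :
    Dt a b c = 0 := by
  set α := f (1, 0) with hα
  set β := f (0, 1) with hβ
  have Eb : α * (b.1 - a.1) + β * (b.2 - a.2) = 0 := by
    have h1 := f_coords f a
    have h2 := f_coords f b
    rw [ha] at h1; rw [hb] at h2
    ring_nf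
    nlinarith [h1, h2]
  have Ec : α * (c.1 - a.1) + β * (c.2 - a.2) = 0 := by
    have h1 := f_coords f a
    have h2 := f_coords f c
    rw [ha] at h1; rw [hc] at h2
    ring_nf
    nlinarith [h1, h2]
  have hαβ : ¬ (α = 0 ∧ β = 0) := by
    rintro ⟨h1, h2⟩
    obtain ⟨y, hy⟩ := hne
    have : f y = γ := by
      rw [f_coords f y, ← hα, ← hβ, h1, h2, ← ha, f_coords f a, ← hα, ← hβ, h1, h2]
      ring
    linarith
  have idα : α * Dt a b c = (c.2 - a.2) * (α * (b.1 - a.1) + β * (b.2 - a.2))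
      - (b.2 - a.2) * (α * (c.1 - a.1) + β * (c.2 - a.2)) := by
    unfold Dt; ring
  have idβ : β * Dt a b c = -(c.1 - a.1) * (α * (b.1 - a.1) + β * (b.2 - a.2))
      + (b.1 - a.1) * (α * (c.1 - a.1) + β * (c.2 - a.2)) := by
    unfold Dt; ring
  rw [Eb, Ec] at idα idβ
  simp at idα idβ
  rcases idα with h | h
  · rcases idβ with h' | h'
    · exact absurd ⟨h, h'⟩ hαβ
    · exact h'
  · exact h

lemma lam_transfer {f : Pt →L[ℝ] ℝ} {u v : Pt} (huv : u ≠ v) (hfu : f u = f v) :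
    ∃ lam : ℝ, ∀ z : Pt, f z - f u = lam * Dt u v z := by
  set α := f (1, 0) with hα
  set β := f (0, 1) with hβ
  have key : ∀ z : Pt, f z - f u = α * (z.1 - u.1) + β * (z.2 - u.2) := by
    intro z
    rw [f_coords f z, f_coords f u, ← hα, ← hβ]; ring
  have hcon : α * (v.1 - u.1) + β * (v.2 - u.2) = 0 := by
    rw [← key v, hfu]; ring
  by_cases h1 : v.1 - u.1 ≠ 0
  · refine ⟨β / (v.1 - u.1), ?_⟩
    intro z
    rw [key z]
    unfold Dt
    rw [div_mul_eq_mul_div, eq_div_iff h1]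
    linear_combination (z.1 - u.1) * hcon
  · push_neg at h1
    have h2 : v.2 - u.2 ≠ 0 := by
      intro h2
      exact huv (Prod.ext (by linarith) (by linarith))
    refine ⟨-α / (v.2 - u.2), ?_⟩
    intro z
    rw [key z]
    unfold Dt
    have h3 : β * (v.2 - u.2) = 0 := by rw [h1] at hcon; linarith
    have hβ0 : β = 0 := by
      rcases mul_eq_zero.mp h3 with h | h
      · exact h
      · exact absurd h h2
    rw [hβ0, h1]
    field_simp
    ring

/-- On a convex set, a functional dominated on the interior is dominated on the whole set. -/
lemma le_on_of_lt_interior {C : Set Pt} (hC : Convex ℝ C) {f : Pt →L[ℝ] ℝ} {c : ℝ}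
    {z : Pt} (hz : z ∈ interior C) (hlt : ∀ w ∈ interior C, f w < c)
    {y : Pt} (hy : y ∈ C) : f y ≤ c := by
  by_contra hgt
  push_neg at hgt
  have hfz : f z < c := hlt z hz
  set t : ℝ := (c - f z) / (f y - f z) with htdef
  have hden : 0 < f y - f z := by linarith
  have ht0 : 0 < t := by
    apply div_pos <;> linarith
  have ht1 : t < 1 := by
    rw [div_lt_one hden]; linarith
  have hmem : (1 - t) • z + t • y ∈ interior C := by
    have := hC.combo_interior_self_mem_interior hz hy (by linarith : (0:ℝ) < 1 - t)
      (le_of_lt ht0) (by ring)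
    exact this
  have hval : f ((1 - t) • z + t • y) = (1 - t) * f z + t * f y := by
    rw [map_add, map_smul, map_smul, smul_eq_mul, smul_eq_mul]
  have := hlt _ hmem
  rw [hval] at this
  have hd0 : f y - f z ≠ 0 := ne_of_gt hden
  have hexp : (1 - t) * f z + t * f y = c := by
    rw [htdef]
    field_simp
    ring
  linarith
/-! ### Setup bundling the hypotheses of the main theorem -/

structure Setup (G : GeomGraph) (n : ℕ) (p : ℕ → Pt) : Prop where
  hn : 3 ≤ n
  hinj : ∀ i < n, ∀ j < n, p i = p j → i = j
  hV : G.V = (Finset.range n).image p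
  hconv : ConvexPos G.V
  hE : G.E = (Finset.range (n - 1)).image (fun i => s(p i, p (i + 1)))
  hhull : ∀ e ∈ G.E, SegOf e ⊆ frontier (convexHull ℝ ((G.V : Set Pt)))

lemma SegOf_mk (a b : Pt) : SegOf s(a, b) = segment ℝ a b := rfl

namespace Setup

variable {G : GeomGraph} {n : ℕ} {p : ℕ → Pt} (St : Setup G n p)
include St

lemma memV {i : ℕ} (hi : i < n) : p i ∈ G.V := by
  rw [St.hV]
  exact Finset.mem_image.mpr ⟨i, Finset.mem_range.mpr hi, rfl⟩

lemma pne {i j : ℕ} (hi : i < n) (hj : j < n) (hij : i ≠ j) : p i ≠ p j :=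
  fun h => hij (St.hinj i hi j hj h)

lemma Dt_ne {i j k : ℕ} (hi : i < n) (hj : j < n) (hk : k < n)
    (hij : i ≠ j) (hik : i ≠ k) (hjk : j ≠ k) : Dt (p i) (p j) (p k) ≠ 0 :=
  fun h => G.genpos (p i) (St.memV hi) (p j) (St.memV hj) (p k) (St.memV hk)
    (St.pne hi hj hij) (St.pne hi hk hik) (St.pne hj hk hjk)
    (collinear_of_Dt_eq_zero h)

lemma edge_mem {t : ℕ} (ht : t + 1 < n) : s(p t, p (t + 1)) ∈ G.E := by
  rw [St.hE]
  exact Finset.mem_image.mpr ⟨t, Finset.mem_range.mpr (by omega), rfl⟩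

lemma edge_seg_sub {t : ℕ} (ht : t + 1 < n) :
    segment ℝ (p t) (p (t + 1)) ⊆ frontier (convexHull ℝ ((G.V : Set Pt))) := by
  have := St.hhull _ (St.edge_mem ht)
  rwa [SegOf_mk] at this

lemma VsubC : (G.V : Set Pt) ⊆ convexHull ℝ ((G.V : Set Pt)) := subset_convexHull ℝ _

lemma closedC : IsClosed (convexHull ℝ ((G.V : Set Pt))) :=
  (G.V.finite_toSet).isClosed_convexHull ℝ

lemma frontier_subC : frontier (convexHull ℝ ((G.V : Set Pt))) ⊆ convexHull ℝ ((G.V : Set Pt)) :=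
  St.closedC.frontier_subset

lemma intNe : (interior (convexHull ℝ ((G.V : Set Pt)))).Nonempty := by
  have hn3 := St.hn
  rw [(convex_convexHull ℝ _).interior_nonempty_iff_affineSpan_eq_top, affineSpan_convexHull]
  have h3 : ¬ Collinear ℝ ({p 0, p 1, p 2} : Set Pt) :=
    G.genpos (p 0) (St.memV (by omega)) (p 1) (St.memV (by omega)) (p 2) (St.memV (by omega))
      (St.pne (by omega) (by omega) (by omega)) (St.pne (by omega) (by omega) (by omega))
      (St.pne (by omega) (by omega) (by omega))
  have hai : AffineIndependent ℝ ![p 0, p 1, p 2] :=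
    affineIndependent_iff_not_collinear_set.mpr h3
  have htop : affineSpan ℝ (Set.range ![p 0, p 1, p 2]) = ⊤ := by
    rw [hai.affineSpan_eq_top_iff_card_eq_finrank_add_one]
    simp
  apply top_unique
  rw [← htop]
  apply affineSpan_mono
  intro x hx
  obtain ⟨i, rfl⟩ := hx
  fin_cases i
  · exact St.memV (by omega)
  · exact St.memV (by omega)
  · exact St.memV (by omega)

/-- Supporting functional at a frontier point. -/
lemma support {x : Pt} (hx : x ∈ frontier (convexHull ℝ ((G.V : Set Pt)))) :
    ∃ f : Pt →L[ℝ] ℝ, (∀ y ∈ convexHull ℝ ((G.V : Set Pt)), f y ≤ f x) ∧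
      (∀ w ∈ interior (convexHull ℝ ((G.V : Set Pt))), f w < f x) := by
  have hxint : x ∉ interior (convexHull ℝ ((G.V : Set Pt))) := fun h => hx.2 h
  obtain ⟨f, hf⟩ := geometric_hahn_banach_open_point
    ((convex_convexHull ℝ _).interior) isOpen_interior hxint
  obtain ⟨z, hz⟩ := St.intNe
  exact ⟨f, fun y hy => le_on_of_lt_interior (convex_convexHull ℝ _) hz hf hy, hf⟩

lemma exists_param_of_Dt_zero {u v x : Pt} (huv : u ≠ v) (h : Dt u v x = 0) :
    ∃ s : ℝ, x = (1 - s) • u + s • v := by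
  by_cases h1 : v.1 - u.1 ≠ 0
  · refine ⟨(x.1 - u.1) / (v.1 - u.1), ?_⟩
    have h2 : (v.1 - u.1) * (x.2 - u.2) = (v.2 - u.2) * (x.1 - u.1) := by
      unfold Dt at h; linarith
    apply Prod.ext
    · simp only [Prod.fst_add, Prod.smul_fst, smul_eq_mul]
      field_simp
      ring
    · simp only [Prod.snd_add, Prod.smul_snd, smul_eq_mul]
      field_simp
      nlinarith [h2]
  · push_neg at h1
    have h2 : v.2 - u.2 ≠ 0 := by
      intro h2
      exact huv (Prod.ext (by linarith) (by linarith))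
    refine ⟨(x.2 - u.2) / (v.2 - u.2), ?_⟩
    have h3 : (v.2 - u.2) * (x.1 - u.1) = 0 := by
      unfold Dt at h; rw [h1] at h; linarith
    have h4 : x.1 - u.1 = 0 := by
      rcases mul_eq_zero.mp h3 with h | h
      · exact absurd h h2
      · exact h
    apply Prod.ext
    · simp only [Prod.fst_add, Prod.smul_fst, smul_eq_mul]
      have hv1 : v.1 = u.1 := by linarith
      rw [hv1]
      ring_nf
      linarith
    · simp only [Prod.snd_add, Prod.smul_snd, smul_eq_mul]
      field_simp
      ring

end Setup

/-- A vertex of a convex-position set cannot lie strictly between a vertex and a hull point. -/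
lemma not_strict_between {V : Finset Pt} (hcv : ConvexPos V) {u v x : Pt}
    (hu : u ∈ V) (hv : v ∈ V) (huv : u ≠ v) (hx : x ∈ convexHull ℝ (V : Set Pt))
    {r : ℝ} (hr0 : 0 < r) (hr1 : r < 1) (heq : v = (1 - r) • u + r • x) : False := by
  have hne : ((V : Set Pt) \ {v}).Nonempty := ⟨u, ⟨hu, huv⟩⟩
  have hVset : (V : Set Pt) = insert v ((V : Set Pt) \ {v}) := by
    rw [Set.insert_diff_singleton]
    exact (Set.insert_eq_self.mpr hv).symm
  rw [hVset, convexHull_insert hne, mem_convexJoin] at hx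
  obtain ⟨a, ha, z, hz, hseg⟩ := hx
  rw [Set.mem_singleton_iff] at ha
  rw [ha] at hseg
  obtain ⟨μ, hμ0, hμ1, hxeq⟩ := seg_param.mp hseg
  set σ : ℝ := 1 - r + r * μ with hσdef
  have hσpos : 0 < σ := by nlinarith
  have hveq : v = (1 - (r * μ) / σ) • u + ((r * μ) / σ) • z := by
    have h1 : v.1 = (1 - r) * u.1 + r * ((1 - μ) * v.1 + μ * z.1) := by
      conv_lhs => rw [heq]
      rw [hxeq]
      simp only [Prod.fst_add, Prod.smul_fst, smul_eq_mul]
      all_goals ring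
    have h2 : v.2 = (1 - r) * u.2 + r * ((1 - μ) * v.2 + μ * z.2) := by
      conv_lhs => rw [heq]
      rw [hxeq]
      simp only [Prod.snd_add, Prod.smul_snd, smul_eq_mul]
      all_goals ring
    apply Prod.ext
    · simp only [Prod.fst_add, Prod.smul_fst, smul_eq_mul]
      rw [hσdef]
      field_simp [show (1 - r + r * μ) ≠ 0 by linarith]
      nlinarith [h1]
    · simp only [Prod.snd_add, Prod.smul_snd, smul_eq_mul]
      rw [hσdef]
      field_simp [show (1 - r + r * μ) ≠ 0 by linarith]
      nlinarith [h2]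
  have hvseg : v ∈ segment ℝ u z := by
    rw [seg_param]
    refine ⟨(r * μ) / σ, ?_, ?_, hveq⟩
    · positivity
    · rw [div_le_one hσpos]; nlinarith
  have : v ∈ convexHull ℝ ((V : Set Pt) \ {v}) := by
    apply (convex_convexHull ℝ _).segment_subset ?_ hz hvseg
    exact subset_convexHull ℝ _ ⟨hu, huv⟩
  exact hcv v hv this

namespace Setup

variable {G : GeomGraph} {n : ℕ} {p : ℕ → Pt} (St : Setup G n p)
include St

/-- The hull meets the line through two vertices only inside the segment. -/
lemma hull_line {i j : ℕ} (hi : i < n) (hj : j < n) (hij : i ≠ j) {x : Pt}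
    (hx : x ∈ convexHull ℝ ((G.V : Set Pt))) (h0 : Dt (p i) (p j) x = 0) :
    x ∈ segment ℝ (p i) (p j) := by
  have huv : p i ≠ p j := St.pne hi hj hij
  obtain ⟨s, hs⟩ := Setup.exists_param_of_Dt_zero St huv h0
  rcases le_or_gt s 0 with hs0 | hs0
  · rcases eq_or_lt_of_le hs0 with hs0' | hs0'
    · rw [seg_param]
      exact ⟨s, le_of_eq hs0'.symm, by linarith, hs⟩
    · -- s < 0 : p i strictly between x and p j
      exfalso
      have hr0 : (0 : ℝ) < 1 / (1 - s) := by
        have : (0:ℝ) < 1 - s := by linarith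
        positivity
      have hr1 : 1 / (1 - s) < 1 := by
        rw [div_lt_one (by linarith)]; linarith
      apply not_strict_between St.hconv (St.memV hj) (St.memV hi) (St.pne hj hi (Ne.symm hij)) hx
        hr0 hr1
      have hden : (1 : ℝ) - s ≠ 0 := by linarith
      apply Prod.ext
      · have h1 : x.1 = (1 - s) * (p i).1 + s * (p j).1 := by
          rw [hs]; simp only [Prod.fst_add, Prod.smul_fst, smul_eq_mul]
        simp only [Prod.fst_add, Prod.smul_fst, smul_eq_mul]
        field_simp
        nlinarith [h1]
      · have h2 : x.2 = (1 - s) * (p i).2 + s * (p j).2 := by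
          rw [hs]; simp only [Prod.snd_add, Prod.smul_snd, smul_eq_mul]
        simp only [Prod.snd_add, Prod.smul_snd, smul_eq_mul]
        field_simp
        nlinarith [h2]
  · rcases le_or_gt s 1 with hs1 | hs1
    · rw [seg_param]
      exact ⟨s, le_of_lt hs0, hs1, hs⟩
    · -- s > 1 : p j strictly between p i and x
      exfalso
      have hr0 : (0 : ℝ) < 1 / s := by positivity
      have hr1 : 1 / s < 1 := by
        rw [div_lt_one (by linarith)]; linarith
      apply not_strict_between St.hconv (St.memV hi) (St.memV hj) huv hx hr0 hr1
      have hden : s ≠ 0 := by linarith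
      apply Prod.ext
      · have h1 : x.1 = (1 - s) * (p i).1 + s * (p j).1 := by
          rw [hs]; simp only [Prod.fst_add, Prod.smul_fst, smul_eq_mul]
        simp only [Prod.fst_add, Prod.smul_fst, smul_eq_mul]
        field_simp
        nlinarith [h1]
      · have h2 : x.2 = (1 - s) * (p i).2 + s * (p j).2 := by
          rw [hs]; simp only [Prod.snd_add, Prod.smul_snd, smul_eq_mul]
        simp only [Prod.snd_add, Prod.smul_snd, smul_eq_mul]
        field_simp
        nlinarith [h2]

end Setup
lemma same_sign_trans {x y z : ℝ} (h1 : 0 < x * y) (h2 : 0 < y * z) : 0 < x * z := by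
  have hy : y ≠ 0 := by
    intro h; rw [h, mul_zero] at h1; exact lt_irrefl 0 h1
  have h3 : 0 < (x * y) * (y * z) := mul_pos h1 h2
  have h4 : (x * y) * (y * z) = (x * z) * (y * y) := by ring
  have h5 : 0 < y * y := mul_self_pos.mpr hy
  nlinarith

lemma opp_sign_trans {x y z : ℝ} (h1 : 0 < x * y) (h2 : z * y < 0) : x * z < 0 := by
  have hy : y ≠ 0 := by
    intro h; rw [h, mul_zero] at h1; exact lt_irrefl 0 h1
  have h3 : (x * y) * (z * y) < 0 := mul_neg_of_pos_of_neg h1 h2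
  have h4 : (x * y) * (z * y) = (x * z) * (y * y) := by ring
  have h5 : 0 < y * y := mul_self_pos.mpr hy
  nlinarith

namespace Setup

variable {G : GeomGraph} {n : ℕ} {p : ℕ → Pt} (St : Setup G n p)
include St

lemma Dt_self₁ (u v : Pt) : Dt u v u = 0 := by unfold Dt; ring
lemma Dt_self₂ (u v : Pt) : Dt u v v = 0 := by unfold Dt; ring

/-- The supporting-line property of each path edge. -/
lemma edge_side {t : ℕ} (ht : t + 1 < n) :
    ∃ (f : Pt →L[ℝ] ℝ) (γ : ℝ), f (p t) = γ ∧ f (p (t + 1)) = γ ∧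
      (∃ z, f z < γ) ∧ (∀ k < n, k ≠ t → k ≠ t + 1 → f (p k) < γ) := by
  set x : Pt := (1 - (1/2 : ℝ)) • p t + (1/2 : ℝ) • p (t + 1) with hxdef
  have hxseg : x ∈ segment ℝ (p t) (p (t + 1)) :=
    seg_param.mpr ⟨1/2, by norm_num, by norm_num, rfl⟩
  have hxf : x ∈ frontier (convexHull ℝ ((G.V : Set Pt))) := St.edge_seg_sub ht hxseg
  obtain ⟨f, hle, hlt⟩ := St.support hxf
  obtain ⟨z, hz⟩ := St.intNe
  have hfx : f x = (1 - (1/2 : ℝ)) * f (p t) + (1/2 : ℝ) * f (p (t + 1)) := by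
    rw [hxdef, map_add, map_smul, map_smul, smul_eq_mul, smul_eq_mul]
  have h1 : f (p t) ≤ f x := hle _ (St.VsubC (St.memV (by omega)))
  have h2 : f (p (t + 1)) ≤ f x := hle _ (St.VsubC (St.memV ht))
  have he1 : f (p t) = f x := by linarith
  have he2 : f (p (t + 1)) = f x := by linarith
  refine ⟨f, f x, he1, he2, ⟨z, hlt z hz⟩, ?_⟩
  intro k hk hk1 hk2
  have h3 : f (p k) ≤ f x := hle _ (St.VsubC (St.memV hk))
  rcases eq_or_lt_of_le h3 with heq | hlt'
  · exfalso
    have hzero : Dt (p t) (p (t + 1)) (p k) = 0 :=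
      Dt_eq_zero_of_level he1 he2 heq ⟨z, hlt z hz⟩
    exact St.Dt_ne (by omega) ht hk (by omega) (Ne.symm hk1) (Ne.symm hk2) hzero
  · exact hlt'

/-- Both sides of a path edge see all other vertices with the same orientation sign. -/
lemma ES {t : ℕ} (ht : t + 1 < n) {k k' : ℕ} (hk : k < n) (hk' : k' < n)
    (h1 : k ≠ t) (h2 : k ≠ t + 1) (h1' : k' ≠ t) (h2' : k' ≠ t + 1) :
    0 < Dt (p t) (p (t + 1)) (p k) * Dt (p t) (p (t + 1)) (p k') := by
  obtain ⟨f, γ, he1, he2, hzlt, hstrict⟩ := St.edge_side ht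
  obtain ⟨lam, hlam⟩ := lam_transfer (St.pne (by omega) ht (by omega)) (he1.trans he2.symm)
  have e1 := hlam (p k)
  have e2 := hlam (p k')
  rw [he1] at e1 e2
  have hk0 : f (p k) - γ < 0 := by have := hstrict k hk h1 h2; linarith
  have hk0' : f (p k') - γ < 0 := by have := hstrict k' hk' h1' h2'; linarith
  have hpos : 0 < (f (p k) - γ) * (f (p k') - γ) := mul_pos_of_neg_of_neg hk0 hk0'
  rw [e1, e2] at hpos
  have hlamne : lam ≠ 0 := by
    intro h
    rw [h] at e1
    simp at e1
    linarith
  nlinarith [sq_nonneg lam, hpos]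

/-- All edges have consistent orientation, referenced to `Dt (p 0) (p 1) (p 2)`. -/
lemma es_ref : ∀ t, t + 1 < n → ∀ k, k < n → k ≠ t → k ≠ t + 1 →
    0 < Dt (p t) (p (t + 1)) (p k) * Dt (p 0) (p 1) (p 2) := by
  intro t
  induction t with
  | zero =>
    intro ht k hk h1 h2
    exact St.ES ht hk (by have := St.hn; omega) h1 h2 (by omega) (by omega)
  | succ t IH =>
    intro ht k hk h1 h2
    have hlink : Dt (p (t + 1)) (p (t + 2)) (p t) = Dt (p t) (p (t + 1)) (p (t + 2)) := by
      rw [Dt_cyc (p t)]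
    have hstep : 0 < Dt (p (t + 1)) (p (t + 2)) (p k) * Dt (p t) (p (t + 1)) (p (t + 2)) := by
      rw [← hlink]
      exact St.ES ht hk (by omega) h1 h2 (by omega) (by omega)
    have hIH : 0 < Dt (p t) (p (t + 1)) (p (t + 2)) * Dt (p 0) (p 1) (p 2) :=
      IH (by omega) (t + 2) (by omega) (by omega) (by omega)
    exact same_sign_trans hstep hIH

/-- Global edge-orientation consistency. -/
lemma esg {t t' k k' : ℕ} (ht : t + 1 < n) (ht' : t' + 1 < n) (hk : k < n) (hk' : k' < n)
    (h1 : k ≠ t) (h2 : k ≠ t + 1) (h1' : k' ≠ t') (h2' : k' ≠ t' + 1) :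
    0 < Dt (p t) (p (t + 1)) (p k) * Dt (p t') (p (t' + 1)) (p k') := by
  have ha := St.es_ref t ht k hk h1 h2
  have hb := St.es_ref t' ht' k' hk' h1' h2'
  rw [mul_comm] at hb
  exact same_sign_trans ha hb

/-- Consecutive vertices (an edge) lie on the same side of any chord line. -/
lemma block_step {a c d : ℕ} (ha : a < n) (hc : c < n) (hac : a ≠ c) (hd : d + 1 < n)
    (h1 : d ≠ a) (h2 : d ≠ c) (h3 : d + 1 ≠ a) (h4 : d + 1 ≠ c) :
    0 < Dt (p a) (p c) (p d) * Dt (p a) (p c) (p (d + 1)) := by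
  set A := Dt (p a) (p c) (p d) with hA
  set B := Dt (p a) (p c) (p (d + 1)) with hB
  have hAne : A ≠ 0 := St.Dt_ne ha hc (by omega) hac (Ne.symm h1) (Ne.symm h2)
  have hBne : B ≠ 0 := St.Dt_ne ha hc hd hac (Ne.symm h3) (Ne.symm h4)
  by_contra hcon
  push_neg at hcon
  have hABlt : A * B < 0 := lt_of_le_of_ne hcon (mul_ne_zero hAne hBne)
  -- find t ∈ (0,1) with (1-t)A + tB = 0
  have hex : ∃ t : ℝ, 0 < t ∧ t < 1 ∧ (1 - t) * A + t * B = 0 := by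
    rcases lt_trichotomy A 0 with hA0 | hA0 | hA0
    · have hB0 : 0 < B := by nlinarith
      refine ⟨(-A) / (B - A), div_pos (by linarith) (by linarith), ?_, ?_⟩
      · rw [div_lt_one (by linarith)]; linarith
      · have hden : B - A ≠ 0 := by linarith
        field_simp
        ring
    · exact absurd hA0 hAne
    · have hB0 : B < 0 := by nlinarith
      refine ⟨A / (A - B), div_pos (by linarith) (by linarith), ?_, ?_⟩
      · rw [div_lt_one (by linarith)]; linarith
      · have hden : A - B ≠ 0 := by linarith
        field_simp
        ring
  obtain ⟨t, ht0, ht1, htz⟩ := hex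
  set x : Pt := (1 - t) • p d + t • p (d + 1) with hxdef
  have hDx : Dt (p a) (p c) x = 0 := by
    rw [hxdef, Dt_seg_affine, ← hA, ← hB, htz]
  have hxseg : x ∈ segment ℝ (p d) (p (d + 1)) := seg_param.mpr ⟨t, le_of_lt ht0, le_of_lt ht1, rfl⟩
  have hxf : x ∈ frontier (convexHull ℝ ((G.V : Set Pt))) := St.edge_seg_sub hd hxseg
  have hxC : x ∈ convexHull ℝ ((G.V : Set Pt)) := St.frontier_subC hxf
  have hxac : x ∈ segment ℝ (p a) (p c) := St.hull_line ha hc hac hxC hDx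
  obtain ⟨r, hr0, hr1, hxr⟩ := seg_param.mp hxac
  have hDdx : Dt (p d) (p (d + 1)) x = 0 := by
    rw [hxdef, Dt_seg_affine, St.Dt_self₁, St.Dt_self₂]
    ring
  have hrne0 : r ≠ 0 := by
    intro h
    rw [h] at hxr
    simp at hxr
    have : Dt (p d) (p (d + 1)) (p a) = 0 := by rw [← hxr]; exact hDdx
    exact St.Dt_ne (by omega) hd ha (by omega) h1 h3 this
  have hrne1 : r ≠ 1 := by
    intro h
    rw [h] at hxr
    simp at hxr
    have : Dt (p d) (p (d + 1)) (p c) = 0 := by rw [← hxr]; exact hDdx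
    exact St.Dt_ne (by omega) hd hc (by omega) h2 h4 this
  obtain ⟨f, hle, hlt⟩ := St.support hxf
  obtain ⟨z, hz⟩ := St.intNe
  have hfx1 : f x = (1 - r) * f (p a) + r * f (p c) := by
    rw [hxr, map_add, map_smul, map_smul, smul_eq_mul, smul_eq_mul]
  have hfx2 : f x = (1 - t) * f (p d) + t * f (p (d + 1)) := by
    rw [hxdef, map_add, map_smul, map_smul, smul_eq_mul, smul_eq_mul]
  have hpa : f (p a) ≤ f x := hle _ (St.VsubC (St.memV ha))
  have hpc : f (p c) ≤ f x := hle _ (St.VsubC (St.memV hc))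
  have hpd : f (p d) ≤ f x := hle _ (St.VsubC (St.memV (by omega)))
  have hpd1 : f (p (d + 1)) ≤ f x := hle _ (St.VsubC (St.memV hd))
  have hr0' : 0 < r := lt_of_le_of_ne hr0 (Ne.symm hrne0)
  have hr1' : r < 1 := lt_of_le_of_ne hr1 hrne1
  have hea : f (p a) = f x := by nlinarith
  have hec : f (p c) = f x := by nlinarith
  have hed : f (p d) = f x := by nlinarith
  have hzero : Dt (p a) (p c) (p d) = 0 :=
    Dt_eq_zero_of_level hea hec hed ⟨z, hlt z hz⟩
  exact hAne hzero

/-- Same-sign propagation along a run of consecutive vertices avoiding the chord. -/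
lemma chain_seg {a c l : ℕ} (ha : a < n) (hc : c < n) (hac : a ≠ c) :
    ∀ r, l ≤ r → r < n → (∀ x, l ≤ x → x ≤ r → x ≠ a ∧ x ≠ c) →
    0 < Dt (p a) (p c) (p l) * Dt (p a) (p c) (p r) := by
  intro r hlr
  induction r, hlr using Nat.le_induction with
  | base =>
    intro hr hav
    have h := hav l le_rfl le_rfl
    exact mul_self_pos.mpr (St.Dt_ne ha hc hr hac (Ne.symm h.1) (Ne.symm h.2))
  | succ r hlr IH =>
    intro hr hav
    have h1 := IH (by omega) (fun x hx1 hx2 => hav x hx1 (by omega))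
    have hr' := hav r (by omega) (by omega)
    have hr1' := hav (r + 1) (by omega) le_rfl
    have h2 := St.block_step ha hc hac hr hr'.1 hr'.2 hr1'.1 hr1'.2
    exact same_sign_trans h1 h2

end Setup
namespace Setup

variable {G : GeomGraph} {n : ℕ} {p : ℕ → Pt} (St : Setup G n p)
include St

/-- Two vertices strictly inside the arc of a chord are on the same side. -/
lemma CS_in_in {a c b b' : ℕ} (hc : c < n) (hab : a < b) (hbc : b < c)
    (hab' : a < b') (hbc' : b' < c) :
    0 < Dt (p a) (p c) (p b) * Dt (p a) (p c) (p b') := by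
  rcases le_or_gt b b' with h | h
  · exact St.chain_seg (by omega) hc (by omega) b' h (by omega)
      (fun x hx1 hx2 => ⟨by omega, by omega⟩)
  · rw [mul_comm]
    exact St.chain_seg (by omega) hc (by omega) b (le_of_lt h) (by omega)
      (fun x hx1 hx2 => ⟨by omega, by omega⟩)

/-- Two vertices strictly outside the arc of a chord are on the same side. -/
lemma CS_out_out {a c d d' : ℕ} (hac : a < c) (hc : c < n) (hd : d < n) (hd' : d' < n)
    (ho : d < a ∨ c < d) (ho' : d' < a ∨ c < d') :
    0 < Dt (p a) (p c) (p d) * Dt (p a) (p c) (p d') := by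
  have key : ∀ e e' : ℕ, e < n → e' < n → (e < a ∨ c < e) → (e' < a ∨ c < e') → e ≤ e' →
      0 < Dt (p a) (p c) (p e) * Dt (p a) (p c) (p e') := by
    intro e e' he he' hoe hoe' hee
    rcases hoe with h1 | h1
    · rcases hoe' with h2 | h2
      · exact St.chain_seg (by omega) hc (by omega) e' hee he'
          (fun x hx1 hx2 => ⟨by omega, by omega⟩)
      · -- e < a , c < e' : go through the anchors a-1 and c+1
        have hA1 : 0 < Dt (p a) (p c) (p e) * Dt (p a) (p c) (p (a - 1)) :=
          St.chain_seg (by omega) hc (by omega) (a - 1) (by omega) (by omega)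
            (fun x hx1 hx2 => ⟨by omega, by omega⟩)
        have hA2 : 0 < Dt (p a) (p c) (p (c + 1)) * Dt (p a) (p c) (p e') :=
          St.chain_seg (by omega) hc (by omega) e' (by omega) he'
            (fun x hx1 hx2 => ⟨by omega, by omega⟩)
        have heq1 : Dt (p (a - 1)) (p a) (p c) = Dt (p a) (p c) (p (a - 1)) := Dt_cyc _ _ _
        have heq2 : Dt (p c) (p (c + 1)) (p a) = Dt (p a) (p c) (p (c + 1)) :=
          (Dt_cyc _ _ _).trans (Dt_cyc _ _ _)
        have hanchor : 0 < Dt (p a) (p c) (p (a - 1)) * Dt (p a) (p c) (p (c + 1)) := by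
          rw [← heq1, ← heq2]
          have ha1 : a - 1 + 1 = a := by omega
          have := St.esg (t := a - 1) (t' := c) (k := c) (k' := a)
            (by omega) (by omega) hc (by omega) (by omega) (by omega) (by omega) (by omega)
          rwa [ha1] at this
        exact same_sign_trans (same_sign_trans hA1 hanchor) hA2
    · rcases hoe' with h2 | h2
      · omega
      · exact St.chain_seg (by omega) hc (by omega) e' hee he'
          (fun x hx1 hx2 => ⟨by omega, by omega⟩)
  rcases le_or_gt d d' with h | h
  · exact key d d' hd hd' ho ho' h
  · rw [mul_comm]
    exact key d' d hd' hd ho' ho (le_of_lt h)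

/-- A vertex strictly inside and a vertex strictly outside are on opposite sides. -/
lemma CS_opp {a c b d : ℕ} (hc : c < n) (hab : a < b) (hbc : b < c) (hd : d < n)
    (ho : d < a ∨ c < d) :
    Dt (p a) (p c) (p b) * Dt (p a) (p c) (p d) < 0 := by
  have hin : 0 < Dt (p a) (p c) (p b) * Dt (p a) (p c) (p (a + 1)) :=
    St.CS_in_in hc hab hbc (by omega) (by omega)
  have heqin : Dt (p a) (p c) (p (a + 1)) = -Dt (p a) (p (a + 1)) (p c) := Dt_swap _ _ _
  -- E := Dt (p a) (p (a+1)) (p c)  (edge a, at c)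
  have hbE : Dt (p a) (p c) (p b) * Dt (p a) (p (a + 1)) (p c) < 0 := by
    rw [heqin] at hin
    nlinarith [hin]
  have houtE : 0 < Dt (p a) (p c) (p d) * Dt (p a) (p (a + 1)) (p c) := by
    rcases ho with h1 | h1
    · have hout : 0 < Dt (p a) (p c) (p d) * Dt (p a) (p c) (p (a - 1)) :=
        St.chain_seg (by omega) hc (by omega) (a - 1) (by omega) (by omega)
          (fun x hx1 hx2 => ⟨by omega, by omega⟩)
      have heq1 : Dt (p (a - 1)) (p a) (p c) = Dt (p a) (p c) (p (a - 1)) := Dt_cyc _ _ _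
      have hgl : 0 < Dt (p a) (p c) (p (a - 1)) * Dt (p a) (p (a + 1)) (p c) := by
        rw [← heq1]
        have ha1 : a - 1 + 1 = a := by omega
        have := St.esg (t := a - 1) (t' := a) (k := c) (k' := c)
          (by omega) (by omega) hc hc (by omega) (by omega) (by omega) (by omega)
        rwa [ha1] at this
      exact same_sign_trans hout hgl
    · have hout : 0 < Dt (p a) (p c) (p (c + 1)) * Dt (p a) (p c) (p d) :=
        St.chain_seg (by omega) hc (by omega) d (by omega) hd
          (fun x hx1 hx2 => ⟨by omega, by omega⟩)
      have heq2 : Dt (p c) (p (c + 1)) (p a) = Dt (p a) (p c) (p (c + 1)) :=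
        (Dt_cyc _ _ _).trans (Dt_cyc _ _ _)
      have hgl : 0 < Dt (p a) (p c) (p (c + 1)) * Dt (p a) (p (a + 1)) (p c) := by
        rw [← heq2]
        exact St.esg (t := c) (t' := a) (k := a) (k' := c)
          (by omega) (by omega) (by omega) hc (by omega) (by omega) (by omega) (by omega)
      rw [mul_comm] at hout
      exact same_sign_trans hout hgl
  have := opp_sign_trans houtE hbE
  rw [mul_comm] at this
  exact this

end Setup
/-! ### Crossing and non-crossing of chords -/

lemma seg_on_line {u v x : Pt} (hx : x ∈ segment ℝ u v) : Dt u v x = 0 := by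
  obtain ⟨t, _, _, rfl⟩ := seg_param.mp hx
  rw [Dt_seg_affine]
  have h1 : Dt u v u = 0 := by unfold Dt; ring
  have h2 : Dt u v v = 0 := by unfold Dt; ring
  rw [h1, h2]; ring

lemma seg_val_ne {u v w z : Pt} (h : 0 < Dt u v w * Dt u v z) {x : Pt}
    (hx : x ∈ segment ℝ w z) : Dt u v x ≠ 0 := by
  obtain ⟨t, ht0, ht1, rfl⟩ := seg_param.mp hx
  rw [Dt_seg_affine]
  rcases lt_trichotomy (Dt u v w) 0 with hw | hw | hw
  · have hz : Dt u v z < 0 := by nlinarith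
    intro h0
    have h1 : (1 - t) * Dt u v w ≤ 0 := mul_nonpos_of_nonneg_of_nonpos (by linarith) hw.le
    have h2 : t * Dt u v z ≤ 0 := mul_nonpos_of_nonneg_of_nonpos ht0 hz.le
    have h1' : (1 - t) * Dt u v w = 0 := by linarith
    have h2' : t * Dt u v z = 0 := by linarith
    rcases mul_eq_zero.mp h1' with h' | h'
    · rcases mul_eq_zero.mp h2' with h'' | h''
      · linarith
      · linarith
    · linarith
  · rw [hw] at h; simp at h
  · have hz : 0 < Dt u v z := by nlinarith
    intro h0
    have h1 : 0 ≤ (1 - t) * Dt u v w := mul_nonneg (by linarith) hw.le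
    have h2 : 0 ≤ t * Dt u v z := mul_nonneg ht0 hz.le
    have h1' : (1 - t) * Dt u v w = 0 := by linarith
    have h2' : t * Dt u v z = 0 := by linarith
    rcases mul_eq_zero.mp h1' with h' | h'
    · rcases mul_eq_zero.mp h2' with h'' | h''
      · linarith
      · linarith
    · linarith

lemma not_edgeCross_of {u v w z : Pt}
    (h : ∀ x : Pt, x ∈ segment ℝ u v → x ∈ segment ℝ w z →
      ((x = u ∨ x = v) ∧ (x = w ∨ x = z))) :
    ¬ EdgeCross s(u, v) s(w, z) := by
  rintro ⟨a, b, c, d, he, hf, x, hx1, hx2, hne⟩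
  rcases Sym2.eq_iff.mp he with ⟨rfl, rfl⟩ | ⟨rfl, rfl⟩ <;>
    rcases Sym2.eq_iff.mp hf with ⟨rfl, rfl⟩ | ⟨rfl, rfl⟩
  · exact hne (h x hx1 hx2)
  · rw [segment_symm] at hx2
    obtain ⟨hA, hB⟩ := h x hx1 hx2
    exact hne ⟨hA, hB.symm⟩
  · rw [segment_symm] at hx1
    obtain ⟨hA, hB⟩ := h x hx1 hx2
    exact hne ⟨hA.symm, hB⟩
  · rw [segment_symm] at hx1 hx2
    obtain ⟨hA, hB⟩ := h x hx1 hx2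
    exact hne ⟨hA.symm, hB.symm⟩

lemma shared_core {A B C : Pt} (hD : Dt A B C ≠ 0) :
    ∀ x : Pt, x ∈ segment ℝ A B → x ∈ segment ℝ A C → x = A := by
  intro x h1 h2
  obtain ⟨t, ht0, ht1, hxt⟩ := seg_param.mp h1
  obtain ⟨s, hs0, hs1, hxs⟩ := seg_param.mp h2
  have hts := hxt.symm.trans hxs
  have e1 := congrArg Prod.fst hts
  have e2 := congrArg Prod.snd hts
  simp only [Prod.fst_add, Prod.snd_add, Prod.smul_fst, Prod.smul_snd, smul_eq_mul] at e1 e2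
  by_cases ht : t = 0
  · rw [hxt, ht]
    apply Prod.ext <;> simp
  · exfalso
    apply hD
    have hmul : Dt A B C * t = 0 := by
      unfold Dt
      linear_combination (C.2 - A.2) * e1 - (C.1 - A.1) * e2
    rcases mul_eq_zero.mp hmul with h | h
    · exact h
    · exact absurd h ht

namespace Setup

variable {G : GeomGraph} {n : ℕ} {p : ℕ → Pt} (St : Setup G n p)
include St

/-- Non-interleaving index chords do not cross. -/
lemma chords_noncross {i j k l : ℕ} (hij : i < j) (hj : j < n) (hkl : k < l) (hl : l < n)
    (hne : (i, j) ≠ (k, l)) (hNI : NI (i, j) (k, l)) :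
    ¬ EdgeCross s(p i, p j) s(p k, p l) := by
  obtain ⟨hN1, hN2⟩ := hNI
  simp only [] at hN1 hN2
  by_cases hik : i = k
  · -- shared first endpoints, j ≠ l
    have hjl : j ≠ l := by
      intro h; exact hne (by rw [hik, h])
    subst hik
    apply not_edgeCross_of
    intro x hx1 hx2
    have hD : Dt (p i) (p j) (p l) ≠ 0 :=
      St.Dt_ne (by omega) hj hl (by omega) (by omega) hjl
    have := shared_core hD x hx1 hx2
    exact ⟨Or.inl this, Or.inl this⟩
  · by_cases hjl : j = l
    · subst hjl
      apply not_edgeCross_of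
      intro x hx1 hx2
      rw [segment_symm] at hx1 hx2
      have hD : Dt (p j) (p i) (p k) ≠ 0 :=
        St.Dt_ne hj (by omega) (by omega) (by omega) (by omega) hik
      have := shared_core hD x hx1 hx2
      exact ⟨Or.inr this, Or.inr this⟩
    · by_cases hjk : j = k
      · subst hjk
        apply not_edgeCross_of
        intro x hx1 hx2
        rw [segment_symm] at hx1
        have hD : Dt (p j) (p i) (p l) ≠ 0 :=
          St.Dt_ne hj (by omega) hl (by omega) (by omega) (by omega)
        have := shared_core hD x hx1 hx2
        exact ⟨Or.inr this, Or.inl this⟩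
      · by_cases hil : i = l
        · subst hil
          apply not_edgeCross_of
          intro x hx1 hx2
          rw [segment_symm] at hx2
          have hD : Dt (p i) (p j) (p k) ≠ 0 :=
            St.Dt_ne (by omega) hj (by omega) (by omega) hik (by omega)
          have := shared_core hD x hx1 hx2
          exact ⟨Or.inl this, Or.inr this⟩
        · -- all four indices distinct
          have hcases : j < k ∨ l < i ∨ (i < k ∧ l < j) ∨ (k < i ∧ j < l) := by omega
          rcases hcases with hc | hc | hc | hc
          · -- disjoint, chord (i,j) line
            have hs : 0 < Dt (p i) (p j) (p k) * Dt (p i) (p j) (p l) :=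
              St.CS_out_out hij hj (by omega) hl (Or.inr hc) (Or.inr (by omega))
            apply not_edgeCross_of
            intro x hx1 hx2
            exact absurd (seg_on_line hx1) (seg_val_ne hs hx2)
          · have hs : 0 < Dt (p i) (p j) (p k) * Dt (p i) (p j) (p l) :=
              St.CS_out_out hij hj (by omega) hl (Or.inl (by omega)) (Or.inl hc)
            apply not_edgeCross_of
            intro x hx1 hx2
            exact absurd (seg_on_line hx1) (seg_val_ne hs hx2)
          · -- (k,l) nested inside (i,j)
            have hs : 0 < Dt (p i) (p j) (p k) * Dt (p i) (p j) (p l) :=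
              St.CS_in_in hj hc.1 (by omega) (by omega) hc.2
            apply not_edgeCross_of
            intro x hx1 hx2
            exact absurd (seg_on_line hx1) (seg_val_ne hs hx2)
          · -- (i,j) nested inside (k,l)
            have hs : 0 < Dt (p k) (p l) (p i) * Dt (p k) (p l) (p j) :=
              St.CS_in_in hl hc.1 (by omega) (by omega) hc.2
            apply not_edgeCross_of
            intro x hx1 hx2
            exact absurd (seg_on_line hx2) (seg_val_ne hs hx1)

/-- Strictly interleaving chords cross. -/
lemma cross_of_interleave {i k j l : ℕ} (h1 : i < k) (h2 : k < j) (h3 : j < l) (hl : l < n) :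
    EdgeCross s(p i, p j) s(p k, p l) := by
  have hopp : Dt (p i) (p j) (p k) * Dt (p i) (p j) (p l) < 0 :=
    St.CS_opp (by omega) h1 h2 hl (Or.inr h3)
  set A := Dt (p i) (p j) (p k) with hA
  set B := Dt (p i) (p j) (p l) with hB
  have hex : ∃ t : ℝ, 0 < t ∧ t < 1 ∧ (1 - t) * A + t * B = 0 := by
    rcases lt_trichotomy A 0 with hA0 | hA0 | hA0
    · have hB0 : 0 < B := by nlinarith
      refine ⟨(-A) / (B - A), div_pos (by linarith) (by linarith), ?_, ?_⟩
      · rw [div_lt_one (by linarith)]; linarith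
      · have hden : B - A ≠ 0 := by linarith
        field_simp
        ring
    · exfalso; rw [hA0] at hopp; simp at hopp
    · have hB0 : B < 0 := by nlinarith
      refine ⟨A / (A - B), div_pos (by linarith) (by linarith), ?_, ?_⟩
      · rw [div_lt_one (by linarith)]; linarith
      · have hden : A - B ≠ 0 := by linarith
        field_simp
        ring
  obtain ⟨t, ht0, ht1, htz⟩ := hex
  set x : Pt := (1 - t) • p k + t • p l with hxdef
  have hxkl : x ∈ segment ℝ (p k) (p l) := seg_param.mpr ⟨t, le_of_lt ht0, le_of_lt ht1, rfl⟩
  have hxC : x ∈ convexHull ℝ ((G.V : Set Pt)) := by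
    apply (convex_convexHull ℝ _).segment_subset
      (St.VsubC (St.memV (by omega))) (St.VsubC (St.memV hl)) hxkl
  have hDx : Dt (p i) (p j) x = 0 := by
    rw [hxdef, Dt_seg_affine, ← hA, ← hB, htz]
  have hxij : x ∈ segment ℝ (p i) (p j) := St.hull_line (by omega) (by omega) (by omega) hxC hDx
  have hxk : x ≠ p k := by
    intro h
    rw [hxdef] at h
    have e1 := congrArg Prod.fst h
    have e2 := congrArg Prod.snd h
    simp only [Prod.fst_add, Prod.snd_add, Prod.smul_fst, Prod.smul_snd, smul_eq_mul] at e1 e2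
    have hkl : p k = p l := by
      apply Prod.ext
      · have : t * ((p l).1 - (p k).1) = 0 := by linarith
        rcases mul_eq_zero.mp this with h' | h'
        · exact absurd h' (by linarith)
        · linarith
      · have : t * ((p l).2 - (p k).2) = 0 := by linarith
        rcases mul_eq_zero.mp this with h' | h'
        · exact absurd h' (by linarith)
        · linarith
    exact St.pne (by omega) hl (by omega) hkl
  have hxl : x ≠ p l := by
    intro h
    rw [hxdef] at h
    have e1 := congrArg Prod.fst h
    have e2 := congrArg Prod.snd h
    simp only [Prod.fst_add, Prod.snd_add, Prod.smul_fst, Prod.smul_snd, smul_eq_mul] at e1 e2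
    have hkl : p k = p l := by
      apply Prod.ext
      · have : (1 - t) * ((p l).1 - (p k).1) = 0 := by linarith
        rcases mul_eq_zero.mp this with h' | h'
        · exact absurd h' (by linarith)
        · linarith
      · have : (1 - t) * ((p l).2 - (p k).2) = 0 := by linarith
        rcases mul_eq_zero.mp this with h' | h'
        · exact absurd h' (by linarith)
        · linarith
    exact St.pne (by omega) hl (by omega) hkl
  exact ⟨p i, p j, p k, p l, rfl, rfl, x, hxij, hxkl, by
    rintro ⟨_, h | h⟩
    · exact hxk h
    · exact hxl h⟩

end Setup
namespace Setup

variable {G : GeomGraph} {n : ℕ} {p : ℕ → Pt} (St : Setup G n p)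
include St

lemma mem_E_iff {e : Sym2 Pt} : e ∈ G.E ↔ ∃ t, t + 1 < n ∧ e = s(p t, p (t + 1)) := by
  have hn3 := St.hn
  rw [St.hE, Finset.mem_image]
  constructor
  · rintro ⟨t, ht, rfl⟩
    exact ⟨t, by have := Finset.mem_range.mp ht; omega, rfl⟩
  · rintro ⟨t, ht, rfl⟩
    exact ⟨t, Finset.mem_range.mpr (by omega), rfl⟩

lemma chord_not_mem {i j : ℕ} (h2 : i + 2 ≤ j) (hj : j < n) : s(p i, p j) ∉ G.E := by
  intro h
  obtain ⟨t, ht, heq⟩ := St.mem_E_iff.mp h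
  rcases Sym2.eq_iff.mp heq with ⟨ha, hb⟩ | ⟨ha, hb⟩
  · have e1 := St.hinj i (by omega) t (by omega) ha
    have e2 := St.hinj j hj (t + 1) ht hb
    omega
  · have e1 := St.hinj i (by omega) (t + 1) ht ha
    have e2 := St.hinj j hj t (by omega) hb
    omega

lemma chord_vis {i j : ℕ} (h2 : i + 2 ≤ j) (hj : j < n) : VisEdge G s(p i, p j) := by
  refine ⟨p i, p j, St.memV (by omega), St.memV hj, St.pne (by omega) hj (by omega), rfl,
    St.chord_not_mem h2 hj, ?_⟩
  intro f hf
  obtain ⟨t, ht, rfl⟩ := St.mem_E_iff.mp hf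
  apply St.chords_noncross (by omega) hj (by omega) ht
  · intro h
    have e1 := ((Prod.mk.injEq _ _ _ _).mp h).1
    have e2 := ((Prod.mk.injEq _ _ _ _).mp h).2
    omega
  · exact NI_mk (by omega) (by omega)

lemma vis_chord {e : Sym2 Pt} (he : VisEdge G e) :
    ∃ i j, i + 2 ≤ j ∧ j < n ∧ e = s(p i, p j) := by
  obtain ⟨u, v, hu, hv, huv, rfl, hnE, _⟩ := he
  rw [St.hV, Finset.mem_image] at hu hv
  obtain ⟨i, hi, rfl⟩ := hu
  obtain ⟨j, hj, rfl⟩ := hv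
  rw [Finset.mem_range] at hi hj
  have hij : i ≠ j := fun h => huv (h ▸ rfl)
  rcases lt_or_gt_of_ne hij with h | h
  · refine ⟨i, j, ?_, hj, rfl⟩
    rcases Nat.lt_or_ge (i + 1) j with h' | h'
    · omega
    · exfalso
      have : j = i + 1 := by omega
      subst this
      exact hnE (St.edge_mem hj)
  · refine ⟨j, i, ?_, hi, Sym2.eq_swap⟩
    rcases Nat.lt_or_ge (j + 1) i with h' | h'
    · omega
    · exfalso
      have : i = j + 1 := by omega
      subst this
      exact hnE (Sym2.eq_swap ▸ St.edge_mem hi)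

omit St

lemma deg_sum {H : Finset (Sym2 Pt)} (hvis : ∀ e ∈ H, VisEdge G e) :
    ∑ v ∈ G.V, degIn H v = 2 * H.card := by
  unfold degIn
  have h1 : ∀ v, (H.filter fun e => v ∈ e).card = ∑ e ∈ H, if v ∈ e then 1 else 0 := by
    intro v; rw [Finset.card_filter]
  simp_rw [h1]
  rw [Finset.sum_comm]
  have h2 : ∀ e ∈ H, (∑ v ∈ G.V, if v ∈ e then 1 else 0) = 2 := by
    intro e he
    obtain ⟨u, v, hu, hv, huv, rfl, _, _⟩ := hvis e he
    have : (∑ w ∈ G.V, if w ∈ s(u, v) then 1 else 0) = (G.V.filter (fun w => w ∈ s(u, v))).card := by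
      rw [Finset.card_filter]
    rw [this]
    have hset : G.V.filter (fun w => w ∈ s(u, v)) = {u, v} := by
      ext w
      simp only [Finset.mem_filter, Sym2.mem_iff, Finset.mem_insert, Finset.mem_singleton]
      constructor
      · rintro ⟨_, h⟩; exact h
      · rintro (rfl | rfl)
        · exact ⟨hu, Or.inl rfl⟩
        · exact ⟨hv, Or.inr rfl⟩
    rw [hset, Finset.card_insert_of_notMem (by simpa using huv), Finset.card_singleton]
  rw [Finset.sum_congr rfl h2, Finset.sum_const, smul_eq_mul, mul_comm]

lemma even_R_of_happy {R : Finset Pt} {H : Finset (Sym2 Pt)} (hR : R ⊆ G.V)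
    (hH : IsHappySet G R H) : Even R.card := by
  obtain ⟨hvis, _, hodd⟩ := hH
  have hReq : R = G.V.filter (fun v => Odd (degIn H v)) := by
    ext v
    rw [Finset.mem_filter]
    constructor
    · intro hv; exact ⟨hR hv, (hodd v).mpr hv⟩
    · rintro ⟨_, h⟩; exact (hodd v).mp h
  have h2 : ∑ v ∈ G.V, (degIn H v % 2) = R.card := by
    rw [hReq, Finset.card_filter]
    apply Finset.sum_congr rfl
    intro v _
    rcases Nat.even_or_odd (degIn H v) with h | h
    · rw [Nat.even_iff.mp h, if_neg (by rwa [Nat.not_odd_iff_even])]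
    · rw [Nat.odd_iff.mp h, if_pos h]
  have h1 := deg_sum hvis
  have h3 : (∑ v ∈ G.V, degIn H v) % 2 = (∑ v ∈ G.V, degIn H v % 2) % 2 :=
    Finset.sum_nat_mod _ _ _
  rw [h1, h2] at h3
  rw [Nat.even_iff]
  omega

end Setup
namespace Setup

variable {G : GeomGraph} {n : ℕ} {p : ℕ → Pt} (St : Setup G n p)
include St

lemma suffice {R : Finset Pt} (hR : R ⊆ G.V) (heven : Even R.card)
    {m : ℕ} (hm1 : 1 ≤ m) (hm2 : m ≤ n - 2) (hmR : p m ∉ R) : HasHappySet G R := by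
  have hn3 := St.hn
  set S := (Finset.range n).filter (fun k => p k ∈ R) with hSdef
  have hSsub : S ⊆ Finset.range n := Finset.filter_subset _ _
  have hSmem : ∀ k, k ∈ S ↔ (k < n ∧ p k ∈ R) := by
    intro k
    rw [hSdef, Finset.mem_filter, Finset.mem_range]
  have hRimg : R = S.image p := by
    ext r
    constructor
    · intro hr
      have := hR hr
      rw [St.hV, Finset.mem_image] at this
      obtain ⟨k, hk, rfl⟩ := this
      exact Finset.mem_image.mpr ⟨k, (hSmem k).mpr ⟨Finset.mem_range.mp hk, hr⟩, rfl⟩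
    · intro hr
      obtain ⟨k, hk, rfl⟩ := Finset.mem_image.mp hr
      exact ((hSmem k).mp hk).2
  have hScard : S.card = R.card := by
    rw [hRimg]
    rw [Finset.card_image_of_injOn]
    intro a ha b hb hab
    exact St.hinj a ((hSmem a).mp ha).1 b ((hSmem b).mp hb).1 hab
  have hmS : m ∉ S := fun h => hmR ((hSmem m).mp h).2
  obtain ⟨P, hGood, hNIP, hdegP⟩ := combo n hn3 S hSsub (hScard ▸ heven) m hm1 hm2 hmS
  have hbnd : ∀ q ∈ P, q.1 + 2 ≤ q.2 ∧ q.2 < n := by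
    intro q hq
    have := hGood q hq
    exact ⟨this.1, by omega⟩
  set f : ℕ × ℕ → Sym2 Pt := fun q => s(p q.1, p q.2) with hfdef
  have hinjP : Set.InjOn f P := by
    intro q hq q' hq' hfe
    have h1 := hbnd q hq
    have h2 := hbnd q' hq'
    rcases Sym2.eq_iff.mp hfe with ⟨ha, hb⟩ | ⟨ha, hb⟩
    · have e1 := St.hinj q.1 (by omega) q'.1 (by omega) ha
      have e2 := St.hinj q.2 (by omega) q'.2 (by omega) hb
      exact Prod.ext e1 e2
    · have e1 := St.hinj q.1 (by omega) q'.2 (by omega) ha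
      have e2 := St.hinj q.2 (by omega) q'.1 (by omega) hb
      exfalso; omega
  refine ⟨P.image f, ?_, ?_, ?_⟩
  · intro e he
    obtain ⟨q, hq, rfl⟩ := Finset.mem_image.mp he
    exact St.chord_vis (hbnd q hq).1 (hbnd q hq).2
  · intro e he e' he' hne
    obtain ⟨q, hq, rfl⟩ := Finset.mem_image.mp he
    obtain ⟨q', hq', rfl⟩ := Finset.mem_image.mp he'
    have hqq : q ≠ q' := fun h => hne (h ▸ rfl)
    have h1 := hbnd q hq
    have h2 := hbnd q' hq'
    apply St.chords_noncross (by omega) h1.2 (by omega) h2.2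
    · intro h
      apply hqq
      have e1 := ((Prod.mk.injEq _ _ _ _).mp h).1
      have e2 := ((Prod.mk.injEq _ _ _ _).mp h).2
      exact Prod.ext e1 e2
    · have := hNIP q hq q' hq' hqq
      exact ⟨by
        intro hc
        exact this.1 ⟨hc.1, hc.2.1, hc.2.2⟩, by
        intro hc
        exact this.2 ⟨hc.1, hc.2.1, hc.2.2⟩⟩
  · intro v
    by_cases hv : ∃ k, k < n ∧ v = p k
    · obtain ⟨k, hk, rfl⟩ := hv
      have hdeq : degIn (P.image f) (p k) = degP P k := by
        unfold degIn degP
        rw [Finset.filter_image]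
        rw [Finset.card_image_of_injOn (hinjP.mono (Finset.filter_subset _ _))]
        congr 1
        apply Finset.filter_congr
        intro q hq
        have h1 := hbnd q hq
        simp only [hfdef, Sym2.mem_iff, eq_iff_iff]
        constructor
        · rintro (h | h)
          · exact Or.inl (St.hinj q.1 (by omega) k hk h.symm)
          · exact Or.inr (St.hinj q.2 (by omega) k hk h.symm)
        · rintro (h | h)
          · exact Or.inl (by rw [h])
          · exact Or.inr (by rw [h])
      rw [hdeq, hdegP k, hSmem k]
      constructor
      · intro h; exact h.2
      · intro h; exact ⟨hk, h⟩
    · have hdeq : degIn (P.image f) v = 0 := by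
        unfold degIn
        rw [Finset.card_eq_zero, Finset.filter_eq_empty_iff]
        intro e he
        obtain ⟨q, hq, rfl⟩ := Finset.mem_image.mp he
        intro hmem
        have h1 := hbnd q hq
        rcases Sym2.mem_iff.mp hmem with h | h
        · exact hv ⟨q.1, by omega, h⟩
        · exact hv ⟨q.2, by omega, h⟩
      rw [hdeq]
      constructor
      · intro h; simp at h
      · intro h
        exfalso
        have := hR h
        rw [St.hV, Finset.mem_image] at this
        obtain ⟨k, hk, hkv⟩ := this
        exact hv ⟨k, Finset.mem_range.mp hk, hkv.symm⟩

lemma necess {R : Finset Pt} (hR : R ⊆ G.V) {H : Finset (Sym2 Pt)}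
    (hH : IsHappySet G R H) :
    Even R.card ∧ ∃ v ∈ G.V, v ∉ R ∧ v ≠ p 0 ∧ v ≠ p (n - 1) := by
  have hn3 := St.hn
  obtain ⟨hvis, hnc, hodd⟩ := hH
  refine ⟨Setup.even_R_of_happy hR ⟨hvis, hnc, hodd⟩, ?_⟩
  by_cases hHe : H = ∅
  · refine ⟨p 1, St.memV (by omega), ?_, St.pne (by omega) (by omega) (by omega),
      St.pne (by omega) (by omega) (by omega)⟩
    intro h
    have := (hodd (p 1)).mpr h
    rw [hHe] at this
    simp [degIn] at this
  · set Q := ((Finset.range n) ×ˢ (Finset.range n)).filter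
      (fun q => q.1 + 2 ≤ q.2 ∧ s(p q.1, p q.2) ∈ H) with hQdef
    have hQmem : ∀ q, q ∈ Q ↔ (q.1 < n ∧ q.2 < n ∧ q.1 + 2 ≤ q.2 ∧ s(p q.1, p q.2) ∈ H) := by
      intro q
      rw [hQdef, Finset.mem_filter, Finset.mem_product, Finset.mem_range, Finset.mem_range]
      tauto
    have hQne : Q.Nonempty := by
      obtain ⟨e, he⟩ := Finset.nonempty_iff_ne_empty.mpr hHe
      obtain ⟨i, j, hij, hjn, rfl⟩ := St.vis_chord (hvis e he)
      exact ⟨(i, j), (hQmem (i, j)).mpr ⟨by omega, hjn, hij, he⟩⟩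
    obtain ⟨q0, hq0, hq0min⟩ := Q.exists_min_image (fun q => q.2 - q.1) hQne
    obtain ⟨hq01, hq02, hq03, hq04⟩ := (hQmem q0).mp hq0
    set i := q0.1 with hidef
    set j := q0.2 with hjdef
    set k := i + 1 with hkdef
    have hkdeg : degIn H (p k) = 0 := by
      unfold degIn
      rw [Finset.card_eq_zero, Finset.filter_eq_empty_iff]
      intro e' he'
      intro hmem
      obtain ⟨a, b, hab, hbn, rfl⟩ := St.vis_chord (hvis e' he')
      have habQ : (a, b) ∈ Q := (hQmem (a, b)).mpr ⟨by omega, hbn, hab, he'⟩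
      have hmin := hq0min (a, b) habQ
      simp only [] at hmin
      have hk : k = a ∨ k = b := by
        rcases Sym2.mem_iff.mp hmem with h | h
        · exact Or.inl (St.hinj k (by omega) a (by omega) h)
        · exact Or.inr (St.hinj k (by omega) b (by omega) h)
      -- e' ≠ s(p i, p j) whenever (a,b) ≠ (i,j)
      have hnee : ∀ (hne : (a, b) ≠ (i, j)), s(p a, p b) ≠ s(p i, p j) := by
        intro hne heq
        rcases Sym2.eq_iff.mp heq with ⟨h1, h2⟩ | ⟨h1, h2⟩
        · exact hne (Prod.ext (St.hinj a (by omega) i (by omega) h1)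
            (St.hinj b (by omega) j (by omega) h2))
        · have e1 := St.hinj a (by omega) j (by omega) h1
          have e2 := St.hinj b (by omega) i (by omega) h2
          omega
      rcases Nat.lt_or_ge a i with hai | hai
      · -- a < i, so k = b and chords (a,k),(i,j) interleave: a < i < k < j
        have hkb : k = b := by
          rcases hk with h | h
          · omega
          · exact h
        have hcross := St.cross_of_interleave (i := a) (k := i) (j := b) (l := j)
          hai (by omega) (by omega) (by omega)
        exact hnc _ he' _ hq04 (hnee (by intro h; have := ((Prod.mk.injEq _ _ _ _).mp h).1; omega))
          hcross
      · rcases Nat.lt_or_ge j b with hjb | hjb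
        · -- b > j so k = a and i < k < j < b
          have hka : k = a := by
            rcases hk with h | h
            · exact h
            · omega
          have hcross := St.cross_of_interleave (i := i) (k := a) (j := j) (l := b)
            (by omega) (by omega) hjb hbn
          have hne2 : s(p i, p j) ≠ s(p a, p b) := by
            intro heq
            exact (hnee (by intro h; have := ((Prod.mk.injEq _ _ _ _).mp h).1; omega)) heq.symm
          exact hnc _ hq04 _ he' hne2 hcross
        · -- i ≤ a, b ≤ j : strictly smaller width, contradiction with minimality
          have : (a, b) = (i, j) := by
            by_contra hcon
            have : ¬ (a = i ∧ b = j) := by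
              intro h; exact hcon (Prod.ext h.1 h.2)
            omega
          have := ((Prod.mk.injEq _ _ _ _).mp this)
          omega
    refine ⟨p k, St.memV (by omega), ?_, St.pne (by omega) (by omega) (by omega),
      St.pne (by omega) (by omega) (by omega)⟩
    intro h
    have := (hodd (p k)).mpr h
    rw [hkdeg] at this
    simp at this

end Setup

/-- Let `G = (V, E)` be a convex plane geometric path with `|V| ≥ 3` whose
edges all lie on the boundary of the convex hull of `V`, and let `R ⊆ V`.  Then `(G, R)` admits
a happy set if and only if `|R|` is even and `V \ R` contains an internal vertex of the path
(a vertex that is not an endpoint of the path). -/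
theorem convex_path_happySet_iff
    (G : GeomGraph) (n : ℕ) (hn : 3 ≤ n) (p : ℕ → Pt)
    (hinj : ∀ i < n, ∀ j < n, p i = p j → i = j)
    (hV : G.V = (Finset.range n).image p)
    (hconv : ConvexPos G.V)
    (hE : G.E = (Finset.range (n - 1)).image (fun i => s(p i, p (i + 1))))
    (hhull : ∀ e ∈ G.E, SegOf e ⊆ frontier (convexHull ℝ ((G.V : Set Pt))))
    (R : Finset Pt) (hR : R ⊆ G.V) :
    HasHappySet G R ↔
      (Even R.card ∧ ∃ v ∈ G.V, v ∉ R ∧ v ≠ p 0 ∧ v ≠ p (n - 1)) := by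
  have St : Setup G n p := ⟨hn, hinj, hV, hconv, hE, hhull⟩
  constructor
  · rintro ⟨H, hH⟩
    exact St.necess hR hH
  · rintro ⟨heven, v, hv, hvR, hv0, hvl⟩
    rw [St.hV, Finset.mem_image] at hv
    obtain ⟨m, hm, rfl⟩ := hv
    rw [Finset.mem_range] at hm
    have hm0 : m ≠ 0 := fun h => hv0 (by rw [h])
    have hml : m ≠ n - 1 := fun h => hvl (by rw [h])
    exact St.suffice hR heven (m := m) (by omega) (by omega) hvR
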